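/- arXiv:2208.02426 — 6 statements merged into one kernel-verified Lean document; each statement's English description precedes it below -/
import Mathlib

section
/- Let n ≥ 1, let C ⊆ ℝⁿ be a configuration such that for every P ∈ C and every d > 0 the set {x ∈ C : dist(x,P) = d} is finite, and let P ∈ C. Suppose there exists an isometry g of ℝⁿ (a distance-preserving bijection of ℝⁿ) with g(C) = C whose only fixed point in ℝⁿ is P. Then for every d > 0, the sum over all x ∈ C with dist(x,P) = d of the vectors (x − P) equals the zero vector. In particular, every group-balanced configuration with finite distance classes is balanced. -/
noncomputable section

/-- If `C ⊆ ℝⁿ` has finite distance classes and `g` is an isometry of `ℝⁿ` preserving `C`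
whose only fixed point is `P ∈ C`, then for every `d > 0` the vectors from `P` to the points
of `C` at distance `d` from `P` sum to zero.  In particular every group-balanced configuration
with finite distance classes is balanced. -/
theorem balanced_of_group_balanced (n : ℕ) (hn : 1 ≤ n)
    (C : Set (EuclideanSpace ℝ (Fin n)))
    (hfin : ∀ P ∈ C, ∀ d : ℝ, 0 < d → {x ∈ C | dist x P = d}.Finite)
    (P : EuclideanSpace ℝ (Fin n)) (hP : P ∈ C)
    (g : EuclideanSpace ℝ (Fin n) ≃ᵢ EuclideanSpace ℝ (Fin n))
    (hgC : g '' C = C)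
    (hfix : ∀ x : EuclideanSpace ℝ (Fin n), g x = x ↔ x = P) :
    ∀ d : ℝ, 0 < d → ∑ᶠ x ∈ {x ∈ C | dist x P = d}, (x - P) = 0 := by
  intro d hd
  have gP : g P = P := (hfix P).mpr rfl
  -- membership in C is preserved by g and g.symm
  have hmemC : ∀ x, x ∈ C → g x ∈ C := by
    intro x hx
    rw [← hgC]; exact ⟨x, hx, rfl⟩
  have hmemC' : ∀ x, x ∈ C → g.symm x ∈ C := by
    intro x hx
    rw [← hgC] at hx
    rcases hx with ⟨y, hy, rfl⟩
    simpa using hy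
  set S : Set (EuclideanSpace ℝ (Fin n)) := {x ∈ C | dist x P = d} with hS
  have hSfin : S.Finite := hfin P hP d hd
  have hmem : ∀ x, x ∈ S → g x ∈ S := by
    rintro x ⟨hx, hdx⟩
    refine ⟨hmemC x hx, ?_⟩
    rw [← gP, g.dist_eq, hdx]
  have hmem' : ∀ x, x ∈ S → g.symm x ∈ S := by
    rintro x ⟨hx, hdx⟩
    refine ⟨hmemC' x hx, ?_⟩
    have hsP : g.symm P = P := by
      conv_lhs => rw [← gP]
      simp
    calc dist (g.symm x) P = dist (g.symm x) (g.symm P) := by rw [hsP]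
    _ = dist x P := g.symm.dist_eq x P
    _ = d := hdx
  -- the linear part of g
  set h : EuclideanSpace ℝ (Fin n) ≃ᵢ EuclideanSpace ℝ (Fin n) :=
    (IsometryEquiv.addRight P).trans (g.trans (IsometryEquiv.addRight (-P))) with hh
  have h0 : h 0 = 0 := by simp [hh, gP]
  set L := h.toRealLinearIsometryEquivOfMapZero h0 with hL
  have hLapply : ∀ x, L x = g (x + P) + -P := by
    intro x
    rw [hL, IsometryEquiv.coe_toRealLinearIsometryEquivOfMapZero]
    rfl
  have hLg : ∀ x, L (x - P) = g x - P := by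
    intro x
    rw [hLapply, sub_add_cancel, sub_eq_add_neg]
  -- fixed vectors of L are zero
  have hLfix : ∀ v, L v = v → v = 0 := by
    intro v hv
    have h1 : v = g (v + P) + -P := by
      have := hLapply v
      rwa [hv] at this
    have h2 : g (v + P) = v + P := by
      conv_rhs => rw [h1]
      abel
    have h3 := (hfix (v + P)).mp h2
    exact add_eq_right.mp h3
  -- convert finsum to finset sum
  rw [finsum_mem_eq_finite_toFinset_sum _ hSfin]
  set F := hSfin.toFinset with hF
  have hmemF : ∀ x, x ∈ F ↔ x ∈ S := fun x => hSfin.mem_toFinset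
  -- g permutes F, so the sum is invariant
  have hsum : ∑ x ∈ F, (x - P) = ∑ x ∈ F, (g x - P) := by
    refine (Finset.sum_nbij' (fun x => g x) (fun x => g.symm x) ?_ ?_ ?_ ?_ ?_).symm
    · intro x hx; exact (hmemF _).mpr (hmem x ((hmemF _).mp hx))
    · intro x hx; exact (hmemF _).mpr (hmem' x ((hmemF _).mp hx))
    · intro x _; simp
    · intro x _; simp
    · intro x _; rfl
  have key : ∑ x ∈ F, (x - P) = L (∑ x ∈ F, (x - P)) := by
    rw [map_sum]
    rw [hsum]
    exact Finset.sum_congr rfl fun x _ => (hLg x).symm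
  exact hLfix _ key.symm
end
end

section
/- Let C ⊆ ℝ² be a balanced configuration with minimal distance 1, and let P ∈ C have exactly 5 neighbors. If x and y are two distinct neighbors of P that are cyclically consecutive around P (i.e., the open angular sector at P bounded by the rays Px and Py and subtending the angle ∠xPy contains no other neighbor of P), then π/3 ≤ ∠xPy < π/2. -/
open EuclideanGeometry RealInnerProductSpace

noncomputable section

/-- The Euclidean plane. -/
abbrev E2 := EuclideanSpace ℝ (Fin 2)

/-- A configuration `C ⊆ ℝ²` is balanced if for every `P ∈ C` and every `d > 0` the set of
points of `C` at distance `d` from `P` is finite and the vectors from `P` to these points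
sum to zero. -/
def IsBalanced (C : Set E2) : Prop :=
  ∀ P ∈ C, ∀ d : ℝ, 0 < d →
    {x ∈ C | dist x P = d}.Finite ∧ ∑ᶠ x ∈ {x ∈ C | dist x P = d}, (x - P) = 0

/-- `C` has minimal distance 1: distinct points are at distance at least 1, and some pair of
points is at distance exactly 1. -/
def MinDistOne (C : Set E2) : Prop :=
  (∀ x ∈ C, ∀ y ∈ C, x ≠ y → 1 ≤ dist x y) ∧ ∃ x ∈ C, ∃ y ∈ C, dist x y = 1

/-- The set of neighbors (points of `C` at distance exactly 1) of `P`. -/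
def nbrs (C : Set E2) (P : E2) : Set E2 := {x ∈ C | dist x P = 1}

open Real

lemma aux_sqrt3_lt_two : Real.sqrt 3 < 2 := by
  nlinarith [Real.sq_sqrt (by norm_num : (0:ℝ) ≤ 3), Real.sqrt_nonneg 3]

lemma aux_core (α β : ℝ) (hα : π/3 ≤ α) (hβ : π/3 ≤ β) (hs : α + β ≤ 5*π/6) :
    1/2 - Real.sqrt 3/2 ≤ Real.cos α + Real.cos β + Real.cos (α+β) := by
  have hpi := Real.pi_pos
  have hα2 : α ≤ π/2 := by linarith
  have h56 : Real.cos (5*π/6) = -(Real.sqrt 3/2) := by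
    have e : (5:ℝ)*π/6 = π - π/6 := by ring
    rw [e, Real.cos_pi_sub, Real.cos_pi_div_six]
  have hs56 : Real.sin (5*π/6) = 1/2 := by
    have e : (5:ℝ)*π/6 = π - π/6 := by ring
    rw [e, Real.sin_pi_sub, Real.sin_pi_div_six]
  have h1 : Real.cos (5*π/6) ≤ Real.cos (α+β) :=
    Real.cos_le_cos_of_nonneg_of_le_pi (by linarith) (by linarith) hs
  have h2 : Real.cos (5*π/6 - α) ≤ Real.cos β :=
    Real.cos_le_cos_of_nonneg_of_le_pi (by linarith) (by linarith) (by linarith)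
  have h3 : Real.cos (5*π/6 - α)
      = -(Real.sqrt 3/2) * Real.cos α + 1/2 * Real.sin α := by
    rw [Real.cos_sub, h56, hs56]
  have hc0 : 0 ≤ Real.cos α := Real.cos_nonneg_of_mem_Icc ⟨by linarith, hα2⟩
  have hc1 : Real.cos α ≤ 1/2 := by
    have := Real.cos_le_cos_of_nonneg_of_le_pi (by positivity : (0:ℝ) ≤ π/3) (by linarith) hα
    rwa [Real.cos_pi_div_three] at this
  have hs0 : 0 ≤ Real.sin α := Real.sin_nonneg_of_nonneg_of_le_pi (by linarith) (by linarith)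
  have hcs : Real.sin α ^ 2 + Real.cos α ^ 2 = 1 := Real.sin_sq_add_cos_sq α
  set t := Real.sqrt 3 with ht
  have ht2 : t^2 = 3 := Real.sq_sqrt (by norm_num)
  have ht0 : 0 ≤ t := Real.sqrt_nonneg 3
  have htlt : t < 2 := aux_sqrt3_lt_two
  set c := Real.cos α
  set s := Real.sin α
  have hprod : 0 ≤ (2-t)*c*(1-2*c) :=
    mul_nonneg (mul_nonneg (by linarith) hc0) (by linarith)
  have ht2c : t^2*c^2 = 3*c^2 := by rw [ht2]
  have h5 : (1-(2-t)*c)^2 ≤ s^2 := by nlinarith [hprod, ht2c, hcs]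
  have h6 : 1-(2-t)*c ≤ s := by
    by_contra hcon
    push_neg at hcon
    nlinarith [mul_self_lt_mul_self hs0 hcon]
  linarith

lemma aux_sorted (γ a b c : ℝ) (hγ1 : π/2 ≤ γ) (hγ2 : γ ≤ π)
    (ha : γ + π/3 ≤ a) (hc : c ≤ 5*π/3) (hab : a + π/3 ≤ b) (hbc : b + π/3 ≤ c) :
    Real.cos γ - 1/2 < Real.cos (a-b) + Real.cos (b-c) + Real.cos (a-c) := by
  have hpi := Real.pi_pos
  have h1 : Real.cos (a-b) = Real.cos (b-a) := by rw [← Real.cos_neg (a-b)]; ring_nf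
  have h2 : Real.cos (b-c) = Real.cos (c-b) := by rw [← Real.cos_neg (b-c)]; ring_nf
  have h3 : Real.cos (a-c) = Real.cos ((b-a) + (c-b)) := by rw [← Real.cos_neg (a-c)]; ring_nf
  rw [h1, h2, h3]
  have hcore := aux_core (b-a) (c-b) (by linarith) (by linarith) (by linarith)
  have hγc : Real.cos γ ≤ 0 :=
    Real.cos_nonpos_of_pi_div_two_le_of_le hγ1 (by linarith)
  have := aux_sqrt3_lt_two
  linarith

lemma aux_key3 (γ p q r : ℝ) (hγ1 : π/2 ≤ γ) (hγ2 : γ ≤ π)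
    (hp1 : γ + π/3 ≤ p) (hp2 : p ≤ 5*π/3)
    (hq1 : γ + π/3 ≤ q) (hq2 : q ≤ 5*π/3)
    (hr1 : γ + π/3 ≤ r) (hr2 : r ≤ 5*π/3)
    (hpq : π/3 ≤ |p-q|) (hqr : π/3 ≤ |q-r|) (hpr : π/3 ≤ |p-r|) :
    Real.cos γ - 1/2 < Real.cos (p-q) + Real.cos (q-r) + Real.cos (p-r) := by
  have hpi := Real.pi_pos
  have even : ∀ u v : ℝ, Real.cos (u-v) = Real.cos (v-u) := by
    intro u v; rw [← Real.cos_neg (u-v)]; ring_nf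
  rcases le_total p q with h1 | h1 <;> rcases le_total q r with h2 | h2 <;>
    rcases le_total p r with h3 | h3
  · have := aux_sorted γ p q r hγ1 hγ2 hp1 hr2 (by cases abs_cases (p-q) <;> linarith)
      (by cases abs_cases (q-r) <;> linarith)
    linarith
  · exfalso; cases abs_cases (p-q) <;> linarith
  · have := aux_sorted γ p r q hγ1 hγ2 hp1 hq2 (by cases abs_cases (p-r) <;> linarith)
      (by cases abs_cases (q-r) <;> linarith)
    rw [even q r]; linarith
  · have := aux_sorted γ r p q hγ1 hγ2 hr1 hq2 (by cases abs_cases (p-r) <;> linarith)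
      (by cases abs_cases (p-q) <;> linarith)
    rw [even q r, even p r]; linarith
  · have := aux_sorted γ q p r hγ1 hγ2 hq1 hr2 (by cases abs_cases (p-q) <;> linarith)
      (by cases abs_cases (p-r) <;> linarith)
    rw [even p q]; linarith
  · have := aux_sorted γ q r p hγ1 hγ2 hq1 hp2 (by cases abs_cases (q-r) <;> linarith)
      (by cases abs_cases (p-r) <;> linarith)
    rw [even p q, even p r]; linarith
  · exfalso; cases abs_cases (q-r) <;> linarith
  · have := aux_sorted γ r q p hγ1 hγ2 hr1 hp2 (by cases abs_cases (q-r) <;> linarith)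
      (by cases abs_cases (p-q) <;> linarith)
    rw [even p q, even q r, even p r]; linarith

instance inst_s5 : Fact (Module.finrank ℝ E2 = 2) := ⟨finrank_euclideanSpace_fin⟩

lemma zpsi (o : Orientation ℝ E2 (Fin 2)) (P x y z : E2)
    (hvx : x - P ≠ 0) (hvy : y - P ≠ 0) (hvz : z - P ≠ 0)
    (hγo : (o.oangle (x - P) (y - P)).toReal = ∠ x P y)
    (hγ2 : π/2 ≤ ∠ x P y)
    (hxz : π/3 ≤ ∠ x P z) (hzy : π/3 ≤ ∠ z P y)
    (hnotin : ¬(∠ x P z ≠ 0 ∧ ∠ z P y ≠ 0 ∧ ∠ x P z + ∠ z P y = ∠ x P y)) :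
    ∃ ψ : ℝ, ∠ x P y + π/3 ≤ ψ ∧ ψ ≤ 5*π/3 ∧ (↑ψ : Real.Angle) = o.oangle (x - P) (z - P) := by
  have hpi := Real.pi_pos
  set γ := ∠ x P y with hγdef
  have hγπ : γ ≤ π := EuclideanGeometry.angle_le_pi x P y
  set θ := (o.oangle (x - P) (z - P)).toReal with hθdef
  have hθcoe : (↑θ : Real.Angle) = o.oangle (x - P) (z - P) := Real.Angle.coe_toReal _
  have hθlo : -π < θ := Real.Angle.neg_pi_lt_toReal _
  have hθhi : θ ≤ π := Real.Angle.toReal_le_pi _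
  have haxz : ∠ x P z = |θ| := o.angle_eq_abs_oangle_toReal hvx hvz
  have hsplit := o.oangle_add hvx hvz hvy
  have hov : o.oangle (x - P) (y - P) = (↑γ : Real.Angle) := by
    rw [← hγo]; exact (Real.Angle.coe_toReal _).symm
  have hozy : o.oangle (z - P) (y - P) = (↑(γ - θ) : Real.Angle) := by
    rw [Real.Angle.coe_sub, hθcoe, ← hov, ← hsplit]; abel
  have hazy : ∠ z P y = |(↑(γ - θ) : Real.Angle).toReal| := by
    rw [EuclideanGeometry.angle, show (z -ᵥ P : E2) = z - P from rfl,
      show (y -ᵥ P : E2) = y - P from rfl,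
      o.angle_eq_abs_oangle_toReal hvz hvy, hozy]
  have hexcl : θ < 0 ∨ γ < θ := by
    by_contra hc
    push_neg at hc
    obtain ⟨h0, h1⟩ := hc
    apply hnotin
    refine ⟨by intro h; rw [h] at hxz; linarith, by intro h; rw [h] at hzy; linarith, ?_⟩
    have e1 : ∠ x P z = θ := by rw [haxz, abs_of_nonneg h0]
    have e2 : ∠ z P y = γ - θ := by
      rw [hazy, Real.Angle.toReal_coe_eq_self_iff.mpr ⟨by linarith, by linarith⟩,
        abs_of_nonneg (by linarith)]
    rw [e1, e2]; ring
  rcases hexcl with hneg | hbig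
  · refine ⟨θ + 2*π, ?_, ?_, ?_⟩
    · rcases le_or_gt (γ - θ) π with hle | hgt
      · linarith
      · have e2 : (↑(γ - θ) : Real.Angle).toReal = γ - θ - 2*π := by
          rw [Real.Angle.toReal_coe_eq_self_sub_two_pi_iff.mpr ⟨hgt, by linarith⟩]
        have : ∠ z P y = 2*π - γ + θ := by
          rw [hazy, e2, abs_of_nonpos (by linarith)]; ring
        linarith [this ▸ hzy]
    · have : π/3 ≤ -θ := by rw [haxz, abs_of_neg hneg] at hxz; linarith
      linarith
    · rw [Real.Angle.coe_add, Real.Angle.coe_two_pi, add_zero, hθcoe]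
  · refine ⟨θ, ?_, by linarith, hθcoe⟩
    have e2 : (↑(γ - θ) : Real.Angle).toReal = γ - θ := by
      rw [Real.Angle.toReal_coe_eq_self_iff.mpr ⟨by linarith, by linarith⟩]
    have : ∠ z P y = θ - γ := by rw [hazy, e2, abs_of_nonpos (by linarith)]; ring
    linarith [this ▸ hzy]

/-- In a balanced configuration with minimal distance 1, if `P` has exactly 5 neighbors and
`x, y` are two distinct neighbors of `P` that are cyclically consecutive around `P` (the open
angular sector at `P` between the rays `Px` and `Py` subtending the angle `∠ x P y` contains
no other neighbor of `P`), then `π/3 ≤ ∠ x P y < π/2`. -/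
theorem five_neighbors_angle_bounds (C : Set E2)
    (hbal : IsBalanced C) (hmin : MinDistOne C)
    (P : E2) (hP : P ∈ C) (h5 : (nbrs C P).encard = 5)
    (x y : E2) (hx : x ∈ nbrs C P) (hy : y ∈ nbrs C P) (hxy : x ≠ y)
    (hconsec : ∀ z ∈ nbrs C P, z ≠ x → z ≠ y →
      ¬(∠ x P z ≠ 0 ∧ ∠ z P y ≠ 0 ∧ ∠ x P z + ∠ z P y = ∠ x P y)) :
    Real.pi / 3 ≤ ∠ x P y ∧ ∠ x P y < Real.pi / 2 := by
  classical
  have hpi := Real.pi_pos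
  set N := nbrs C P with hNdef
  -- pairwise angles are at least π/3
  have hang : ∀ a ∈ N, ∀ b ∈ N, a ≠ b → π/3 ≤ ∠ a P b := by
    intro a ha b hb hab
    have hd : 1 ≤ dist a b := hmin.1 a ha.1 b hb.1 hab
    have h1 : dist a P = 1 := ha.2
    have h2 : dist b P = 1 := hb.2
    have hlaw := EuclideanGeometry.law_cos a P b
    rw [h1, h2] at hlaw
    have hcos : Real.cos (∠ a P b) ≤ 1/2 := by nlinarith [hd]
    by_contra hcon
    push_neg at hcon
    have h0 : 0 ≤ ∠ a P b := EuclideanGeometry.angle_nonneg a P b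
    have := Real.strictAntiOn_cos
      (Set.mem_Icc.2 ⟨h0, by linarith [EuclideanGeometry.angle_le_pi a P b]⟩)
      (Set.mem_Icc.2 ⟨by positivity, by linarith⟩) hcon
    rw [Real.cos_pi_div_three] at this
    linarith
  refine ⟨hang x hx y hy hxy, ?_⟩
  by_contra hcon
  push_neg at hcon
  -- hcon : π / 2 ≤ ∠ x P y
  set γ := ∠ x P y with hγdef
  have hγπ : γ ≤ π := EuclideanGeometry.angle_le_pi x P y
  -- unit vectors
  have hnz : ∀ z ∈ N, z - P ≠ 0 := by
    intro z hz h
    have h1 : dist z P = 1 := hz.2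
    rw [dist_eq_norm, h, norm_zero] at h1
    norm_num at h1
  have hnorm : ∀ z ∈ N, ‖z - P‖ = 1 := by
    intro z hz
    rw [← dist_eq_norm]; exact hz.2
  -- sum of neighbor vectors is zero
  have hsum : ∑ᶠ n ∈ N, (n - P) = 0 := (hbal P hP 1 one_pos).2
  -- extract the three other neighbors
  have hxyN : ({x, y} : Set E2) ⊆ N := by
    intro t ht; rcases ht with h | h
    · exact h ▸ hx
    · exact h ▸ hy
  have h2card : ({x, y} : Set E2).encard = 2 := Set.encard_pair hxy
  have hdiff : (N \ {x, y}).encard = 3 := by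
    have h := Set.encard_diff_add_encard_of_subset hxyN
    rw [h2card, h5] at h
    have h' : (N \ {x, y}).encard + 2 = 3 + 2 := by rw [h]; rfl
    exact WithTop.add_right_cancel (show (2 : ℕ∞) ≠ ⊤ by simp) h'
  obtain ⟨z1, z2, z3, h12, h13, h23, hset⟩ := Set.encard_eq_three.mp hdiff
  have hz1 : z1 ∈ N \ {x, y} := by rw [hset]; exact Set.mem_insert _ _
  have hz2 : z2 ∈ N \ {x, y} := by rw [hset]; simp
  have hz3 : z3 ∈ N \ {x, y} := by rw [hset]; simp
  have hz1x : z1 ≠ x := fun h => hz1.2 (by simp [h])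
  have hz1y : z1 ≠ y := fun h => hz1.2 (by simp [h])
  have hz2x : z2 ≠ x := fun h => hz2.2 (by simp [h])
  have hz2y : z2 ≠ y := fun h => hz2.2 (by simp [h])
  have hz3x : z3 ≠ x := fun h => hz3.2 (by simp [h])
  have hz3y : z3 ≠ y := fun h => hz3.2 (by simp [h])
  have hz1N : z1 ∈ N := hz1.1
  have hz2N : z2 ∈ N := hz2.1
  have hz3N : z3 ∈ N := hz3.1
  have hsum5 : (x - P) + (y - P) + ((z1 - P) + (z2 - P) + (z3 - P)) = 0 := by
    have hNeq : N = {x, y, z1, z2, z3} := by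
      rw [← Set.union_diff_cancel hxyN, hset]
      ext t; simp [Set.mem_insert_iff]; tauto
    have hNs : N = (↑({x, y, z1, z2, z3} : Finset E2) : Set E2) := by
      rw [hNeq]; simp
    rw [hNs, finsum_mem_coe_finset] at hsum
    rw [Finset.sum_insert (by simp [hxy, hz1x.symm, hz2x.symm, hz3x.symm]),
      Finset.sum_insert (by simp [hz1y.symm, hz2y.symm, hz3y.symm]),
      Finset.sum_insert (by simp [h12, h13]),
      Finset.sum_insert (by simp [h23]), Finset.sum_singleton] at hsum
    linear_combination (norm := abel) hsum
  -- choose an orientation making the angle from x to y nonnegative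
  have hvx : x - P ≠ 0 := hnz x hx
  have hvy : y - P ≠ 0 := hnz y hy
  obtain ⟨o, hγo⟩ : ∃ o : Orientation ℝ E2 (Fin 2),
      (o.oangle (x - P) (y - P)).toReal = ∠ x P y := by
    set o₀ : Orientation ℝ E2 (Fin 2) :=
      (Module.finBasisOfFinrankEq ℝ E2 finrank_euclideanSpace_fin).orientation with ho₀
    have hEA : ∠ x P y = InnerProductGeometry.angle (x - P) (y - P) := rfl
    have habs : InnerProductGeometry.angle (x - P) (y - P)
        = |(o₀.oangle (x - P) (y - P)).toReal| :=
      o₀.angle_eq_abs_oangle_toReal hvx hvy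
    rcases le_or_gt 0 ((o₀.oangle (x - P) (y - P)).toReal) with h | h
    · exact ⟨o₀, by rw [hEA, habs, abs_of_nonneg h]⟩
    · refine ⟨-o₀, ?_⟩
      rw [Orientation.oangle_neg_orientation_eq_neg]
      set θ := (o₀.oangle (x - P) (y - P)).toReal with hθ
      have h1 : -π < θ := Real.Angle.neg_pi_lt_toReal _
      have hcoe : o₀.oangle (x - P) (y - P) = (θ : Real.Angle) := (Real.Angle.coe_toReal _).symm
      rw [hcoe, ← Real.Angle.coe_neg,
        Real.Angle.toReal_coe_eq_self_iff.mpr ⟨by linarith, by linarith⟩,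
        hEA, habs, abs_of_neg h]
  -- angular coordinates for the three other neighbors
  obtain ⟨ψ1, hψ1a, hψ1b, hψ1c⟩ := zpsi o P x y z1 hvx hvy (hnz z1 hz1N) hγo hcon
    (hang x hx z1 hz1N (Ne.symm hz1x)) (hang z1 hz1N y hy hz1y)
    (hconsec z1 hz1N hz1x hz1y)
  obtain ⟨ψ2, hψ2a, hψ2b, hψ2c⟩ := zpsi o P x y z2 hvx hvy (hnz z2 hz2N) hγo hcon
    (hang x hx z2 hz2N (Ne.symm hz2x)) (hang z2 hz2N y hy hz2y)
    (hconsec z2 hz2N hz2x hz2y)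
  obtain ⟨ψ3, hψ3a, hψ3b, hψ3c⟩ := zpsi o P x y z3 hvx hvy (hnz z3 hz3N) hγo hcon
    (hang x hx z3 hz3N (Ne.symm hz3x)) (hang z3 hz3N y hy hz3y)
    (hconsec z3 hz3N hz3x hz3y)
  -- inner products among the z's
  have hinner : ∀ zi ∈ N, ∀ zj ∈ N, ∀ ψi ψj : ℝ,
      (↑ψi : Real.Angle) = o.oangle (x - P) (zi - P) →
      (↑ψj : Real.Angle) = o.oangle (x - P) (zj - P) →
      ⟪zi - P, zj - P⟫ = Real.cos (ψi - ψj) := by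
    intro zi hzi zj hzj ψi ψj hi hj
    have hsplit := o.oangle_add hvx (hnz zi hzi) (hnz zj hzj)
    have hoij : o.oangle (zi - P) (zj - P) = (↑(ψj - ψi) : Real.Angle) := by
      rw [Real.Angle.coe_sub, hi, hj, ← hsplit]; abel
    rw [o.inner_eq_norm_mul_norm_mul_cos_oangle, hnorm zi hzi, hnorm zj hzj, hoij,
      Real.Angle.cos_coe]
    rw [show ψj - ψi = -(ψi - ψj) by ring, Real.cos_neg]
    ring
  -- pairwise separation of the ψ's
  have hsep : ∀ zi ∈ N, ∀ zj ∈ N, ∀ ψi ψj : ℝ, zi ≠ zj →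
      (↑ψi : Real.Angle) = o.oangle (x - P) (zi - P) →
      (↑ψj : Real.Angle) = o.oangle (x - P) (zj - P) →
      γ + π/3 ≤ ψi → ψi ≤ 5*π/3 → γ + π/3 ≤ ψj → ψj ≤ 5*π/3 →
      π/3 ≤ |ψi - ψj| := by
    intro zi hzi zj hzj ψi ψj hne hi hj hia hib hja hjb
    have hsplit := o.oangle_add hvx (hnz zi hzi) (hnz zj hzj)
    have hoij : o.oangle (zi - P) (zj - P) = (↑(ψj - ψi) : Real.Angle) := by
      rw [Real.Angle.coe_sub, hi, hj, ← hsplit]; abel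
    have hangij : ∠ zi P zj = |(↑(ψj - ψi) : Real.Angle).toReal| := by
      rw [EuclideanGeometry.angle, show (zi -ᵥ P : E2) = zi - P from rfl,
        show (zj -ᵥ P : E2) = zj - P from rfl,
        o.angle_eq_abs_oangle_toReal (hnz zi hzi) (hnz zj hzj), hoij]
    have htr : (↑(ψj - ψi) : Real.Angle).toReal = ψj - ψi := by
      rw [Real.Angle.toReal_coe_eq_self_iff.mpr ⟨by linarith, by linarith⟩]
    have := hang zi hzi zj hzj hne
    rw [hangij, htr] at this
    rw [abs_sub_comm]
    exact this
  -- the inner products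
  have h12i := hinner z1 hz1N z2 hz2N ψ1 ψ2 hψ1c hψ2c
  have h13i := hinner z1 hz1N z3 hz3N ψ1 ψ3 hψ1c hψ3c
  have h23i := hinner z2 hz2N z3 hz3N ψ2 ψ3 hψ2c hψ3c
  have h12s := hsep z1 hz1N z2 hz2N ψ1 ψ2 h12 hψ1c hψ2c hψ1a hψ1b hψ2a hψ2b
  have h13s := hsep z1 hz1N z3 hz3N ψ1 ψ3 h13 hψ1c hψ3c hψ1a hψ1b hψ3a hψ3b
  have h23s := hsep z2 hz2N z3 hz3N ψ2 ψ3 h23 hψ2c hψ3c hψ2a hψ2b hψ3a hψ3b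
  -- ⟪u, v⟫ = cos γ
  have hoxy : o.oangle (x - P) (y - P) = (↑γ : Real.Angle) := by
    rw [hγdef, ← hγo]; exact (Real.Angle.coe_toReal _).symm
  have huv : ⟪x - P, y - P⟫ = Real.cos γ := by
    rw [o.inner_eq_norm_mul_norm_mul_cos_oangle, hnorm x hx, hnorm y hy, hoxy,
      Real.Angle.cos_coe]
    ring
  -- the norm identity
  have hneg : (z1 - P) + (z2 - P) + (z3 - P) = -((x - P) + (y - P)) := by
    linear_combination (norm := abel) hsum5
  have hn1 : ‖(x - P) + (y - P)‖^2 = 2 + 2 * Real.cos γ := by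
    rw [norm_add_sq_real, hnorm x hx, hnorm y hy, huv]; ring
  have hn2 : ‖(z1 - P) + (z2 - P) + (z3 - P)‖^2
      = 3 + 2 * (Real.cos (ψ1 - ψ2) + Real.cos (ψ2 - ψ3) + Real.cos (ψ1 - ψ3)) := by
    rw [norm_add_sq_real, norm_add_sq_real, hnorm z1 hz1N, hnorm z2 hz2N, hnorm z3 hz3N,
      inner_add_left, h12i, h13i, h23i]
    ring
  have hkey := aux_key3 γ ψ1 ψ2 ψ3 hcon hγπ hψ1a hψ1b hψ2a hψ2b hψ3a hψ3b h12s h23s h13s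
  rw [hneg, norm_neg] at hn2
  rw [hn1] at hn2
  linarith
end
end

section
/- Let P ∈ ℝ² and let P₁, …, P₆ be six distinct points, each at distance exactly 1 from P, with any two distinct Pᵢ, Pⱼ at distance at least 1 from each other. Then the six points form a regular hexagon centered at P: the angles between cyclically consecutive points at P are all exactly π/3; equivalently, there is a unit vector e such that {P₁,…,P₆} = {P + R(kπ/3)·e : k = 0,1,…,5}, where R(θ) denotes rotation of ℝ² by angle θ. -/
open EuclideanGeometry RealInnerProductSpace

noncomputable section

instance : Fact (Module.finrank ℝ E2 = 2) := ⟨finrank_euclideanSpace_fin⟩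

/-- The standard orientation of the plane. -/
def stdOrientation : Orientation ℝ E2 (Fin 2) :=
  (EuclideanSpace.basisFun (Fin 2) ℝ).toBasis.orientation

private lemma cos_le_half_imp {x : ℝ} (hx : 0 ≤ x) (hc : Real.cos x ≤ 1/2) :
    Real.pi / 3 ≤ x := by
  by_contra h
  push_neg at h
  have := Real.cos_lt_cos_of_nonneg_of_le_pi hx
    (by linarith [Real.pi_pos] : Real.pi / 3 ≤ Real.pi) h
  rw [Real.cos_pi_div_three] at this
  linarith

/-- Six reals in `(-π, π]`, weakly increasing, with pairwise `cos` of differences at most `1/2`,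
must be equally spaced with gap `π/3`. -/
private lemma gap_lemma (g : Fin 6 → ℝ) (hmono : Monotone g)
    (hlo : -Real.pi < g 0) (hhi : g 5 ≤ Real.pi)
    (hcos : ∀ i j : Fin 6, i ≠ j → Real.cos (g i - g j) ≤ 1/2) :
    ∀ k : Fin 6, g k = g 0 + ((k : ℕ) : ℝ) * (Real.pi / 3) := by
  have d01 : Real.pi / 3 ≤ g 1 - g 0 :=
    cos_le_half_imp (sub_nonneg.2 (hmono (by decide))) (hcos 1 0 (by decide))
  have d12 : Real.pi / 3 ≤ g 2 - g 1 :=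
    cos_le_half_imp (sub_nonneg.2 (hmono (by decide))) (hcos 2 1 (by decide))
  have d23 : Real.pi / 3 ≤ g 3 - g 2 :=
    cos_le_half_imp (sub_nonneg.2 (hmono (by decide))) (hcos 3 2 (by decide))
  have d34 : Real.pi / 3 ≤ g 4 - g 3 :=
    cos_le_half_imp (sub_nonneg.2 (hmono (by decide))) (hcos 4 3 (by decide))
  have d45 : Real.pi / 3 ≤ g 5 - g 4 :=
    cos_le_half_imp (sub_nonneg.2 (hmono (by decide))) (hcos 5 4 (by decide))
  have dtop : g 5 - g 0 ≤ 5 * Real.pi / 3 := by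
    have h0 : (0:ℝ) ≤ 2 * Real.pi - (g 5 - g 0) := by linarith
    have hc : Real.cos (2 * Real.pi - (g 5 - g 0)) ≤ 1/2 := by
      rw [Real.cos_two_pi_sub]
      exact hcos 5 0 (by decide)
    have := cos_le_half_imp h0 hc
    linarith
  intro k
  fin_cases k <;> simp <;> linarith

/-- If six distinct points are each at distance exactly 1 from `P`, with any two of them at
distance at least 1 from each other, then they form a regular hexagon centered at `P`:
there is a unit vector `e` such that the six points are the rotations of `P + e` about `P`
through the angles `kπ/3`, `k = 0, 1, …, 5`. -/
theorem six_neighbors_regular_hexagon (P : E2) (p : Fin 6 → E2)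
    (hinj : Function.Injective p)
    (hdist : ∀ i, dist (p i) P = 1)
    (hsep : ∀ i j, i ≠ j → 1 ≤ dist (p i) (p j)) :
    ∃ e : E2, ‖e‖ = 1 ∧
      Set.range p =
        {x | ∃ k : Fin 6,
          x = P + stdOrientation.rotation ((((k : ℕ) : ℝ) * (Real.pi / 3) : ℝ) : Real.Angle) e} := by
  set o := stdOrientation with ho
  set v : Fin 6 → E2 := fun i => p i - P with hv
  have hvnorm : ∀ i, ‖v i‖ = 1 := by
    intro i; rw [hv]; simpa [dist_eq_norm] using hdist i
  have hvne : ∀ i, v i ≠ 0 := fun i => by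
    intro h; have := hvnorm i; rw [h] at this; simp at this
  have hinner : ∀ i j : Fin 6, i ≠ j → (inner ℝ (v i) (v j) : ℝ) ≤ 1/2 := by
    intro i j hij
    have h1 : (1:ℝ) ≤ ‖v i - v j‖ := by
      have := hsep i j hij
      rw [dist_eq_norm] at this
      simpa [hv, sub_sub_sub_cancel_right] using this
    have h2 : (1:ℝ) ≤ ‖v i - v j‖ ^ 2 := by nlinarith [norm_nonneg (v i - v j)]
    have h3 := norm_sub_sq_real (v i) (v j)
    rw [hvnorm i, hvnorm j] at h3
    nlinarith
  set θ : Fin 6 → ℝ := fun i => (o.oangle (v 0) (v i)).toReal with hθ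
  have hsub : ∀ i j : Fin 6,
      ((θ i - θ j : ℝ) : Real.Angle) = o.oangle (v j) (v i) := by
    intro i j
    have h1 : o.oangle (v j) (v 0) + o.oangle (v 0) (v i) = o.oangle (v j) (v i) :=
      o.oangle_add (hvne j) (hvne 0) (hvne i)
    have h2 : o.oangle (v j) (v 0) = -o.oangle (v 0) (v j) := o.oangle_rev _ _
    rw [hθ]
    simp only [Real.Angle.coe_sub, Real.Angle.coe_toReal]
    rw [← h1, h2]; abel
  have hcosθ : ∀ i j : Fin 6, i ≠ j → Real.cos (θ i - θ j) ≤ 1/2 := by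
    intro i j hij
    have hc : Real.Angle.cos ((θ i - θ j : ℝ) : Real.Angle) ≤ 1/2 := by
      rw [hsub i j, o.cos_oangle_eq_inner_div_norm_mul_norm (hvne j) (hvne i),
        hvnorm j, hvnorm i]
      simpa using hinner j i (Ne.symm hij)
    rwa [Real.Angle.cos_coe] at hc
  set σ := Tuple.sort θ with hσ
  set g := θ ∘ σ with hgdef
  have hmono : Monotone g := Tuple.monotone_sort θ
  have hcosg : ∀ i j : Fin 6, i ≠ j → Real.cos (g i - g j) ≤ 1/2 :=
    fun i j hij => hcosθ (σ i) (σ j) (fun h => hij (σ.injective h))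
  have hgk := gap_lemma g hmono (Real.Angle.neg_pi_lt_toReal _) (Real.Angle.toReal_le_pi _) hcosg
  have hoang : ∀ k : Fin 6,
      o.oangle (v (σ 0)) (v (σ k)) = ((((k:ℕ):ℝ) * (Real.pi/3) : ℝ) : Real.Angle) := by
    intro k
    rw [← hsub (σ k) (σ 0)]
    congr 1
    have h : g k - g 0 = ((k:ℕ):ℝ) * (Real.pi/3) := by rw [hgk k]; ring
    simpa [hgdef] using h
  have hrot : ∀ k : Fin 6,
      o.rotation ((((k:ℕ):ℝ) * (Real.pi/3) : ℝ) : Real.Angle) (v (σ 0)) = v (σ k) := by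
    intro k
    rw [← hoang k]
    exact (o.rotation_oangle_eq_iff_norm_eq _ _).2 (by rw [hvnorm, hvnorm])
  refine ⟨v (σ 0), hvnorm _, ?_⟩
  ext x
  simp only [Set.mem_range, Set.mem_setOf_eq]
  constructor
  · rintro ⟨i, rfl⟩
    refine ⟨σ.symm i, ?_⟩
    have h := hrot (σ.symm i)
    rw [Equiv.apply_symm_apply] at h
    rw [h, hv]
    simp
  · rintro ⟨k, rfl⟩
    exact ⟨σ k, by rw [hrot k, hv]; simp⟩
end
end

section
/- Let C ⊆ ℝ² be a balanced configuration with minimal distance 1, and suppose some point P ∈ C has exactly 6 neighbors. Then C is a triangular lattice: there exist unit vectors u, v with ⟨u,v⟩ = 1/2 such that C = {P + a·u + b·v : a, b ∈ ℤ}. -/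
open EuclideanGeometry RealInnerProductSpace

noncomputable section

section TriangularLatticeProof
open Complex Finset Real

local notation "cabs" => (Norm.norm : ℂ → ℝ)

namespace Tri

def ζ : ℂ := ⟨1/2, Real.sqrt 3 / 2⟩

lemma sqrt3_sq : Real.sqrt 3 * Real.sqrt 3 = 3 := Real.mul_self_sqrt (by norm_num)
lemma sqrt3_pos : 0 < Real.sqrt 3 := Real.sqrt_pos.2 (by norm_num)

lemma zeta_re : ζ.re = 1/2 := rfl
lemma zeta_im : ζ.im = Real.sqrt 3 / 2 := rfl

lemma zeta_sq : ζ^2 = ζ - 1 := by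
  apply Complex.ext <;>
    simp [pow_two, ζ, Complex.mul_re, Complex.mul_im, Complex.sub_re, Complex.sub_im] <;>
    nlinarith [sqrt3_sq]

lemma zeta_cube : ζ^3 = -1 := by
  have : ζ^3 = ζ * ζ^2 := by ring
  rw [this, zeta_sq, mul_sub, ← pow_two, zeta_sq]; ring

lemma zeta_pow4 : ζ^4 = -ζ := by
  have : ζ^4 = ζ * ζ^3 := by ring
  rw [this, zeta_cube]; ring

lemma zeta_pow5 : ζ^5 = 1 - ζ := by
  have : ζ^5 = ζ * ζ^4 := by ring
  rw [this, zeta_pow4]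
  have h2 := zeta_sq
  linear_combination -h2

lemma zeta_pow6 : ζ^6 = 1 := by
  have : ζ^6 = (ζ^3)^2 := by ring
  rw [this, zeta_cube]; ring

lemma abs_zeta : cabs ζ = 1 := by
  have : Complex.normSq ζ = 1 := by
    simp [Complex.normSq_apply, ζ]; nlinarith [sqrt3_sq]
  have h := Complex.sq_norm ζ
  rw [this] at h
  nlinarith [norm_nonneg ζ]

lemma zeta_exp : ζ = Complex.exp ((Real.pi/3 : ℝ) * Complex.I) := by
  apply Complex.ext
  · rw [Complex.exp_ofReal_mul_I_re, Real.cos_pi_div_three]; rfl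
  · rw [Complex.exp_ofReal_mul_I_im, Real.sin_pi_div_three]; rfl

lemma zeta_pow_exp (k : ℕ) : ζ^k = Complex.exp ((k * (Real.pi/3) : ℝ) * Complex.I) := by
  rw [zeta_exp, ← Complex.exp_nat_mul]
  congr 1
  push_cast
  ring

lemma zeta_pow_mod (k : ℕ) : ζ^k = ζ^(k % 6) := by
  conv_lhs => rw [← Nat.div_add_mod k 6, pow_add, pow_mul, zeta_pow6, one_pow, one_mul]

lemma zeta_ne_one : ζ ≠ 1 := by
  intro h
  have : ζ.im = 0 := by rw [h]; rfl
  rw [zeta_im] at this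
  nlinarith [sqrt3_pos]

lemma zeta_pow_ne_one {k : ℕ} (h1 : 1 ≤ k) (h5 : k ≤ 5) : ζ^k ≠ 1 := by
  interval_cases k
  · simpa using zeta_ne_one
  · rw [zeta_sq]; intro h
    have h2 : ζ = 2 := by linear_combination h
    have h3 : ζ.re = (2:ℂ).re := congrArg Complex.re h2
    rw [zeta_re] at h3; norm_num at h3
  · rw [zeta_cube]; intro h
    have : ((-1 : ℂ)).re = 1 := by rw [h]; rfl
    norm_num at this
  · rw [zeta_pow4]; intro h
    have : ζ = -1 := by linear_combination -h
    have h2 := zeta_im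
    rw [this] at h2
    simp at h2
    nlinarith [sqrt3_pos]
  · rw [zeta_pow5]; intro h
    have : ζ = 0 := by linear_combination -h
    have h2 := zeta_im
    rw [this] at h2
    simp at h2
    nlinarith [sqrt3_pos]

lemma zeta_ne_zero : ζ ≠ 0 := by
  intro h
  have := abs_zeta
  rw [h] at this
  simp at this

lemma zeta_pow_inj {i j : ℕ} (hi : i < 6) (hj : j < 6) (h : ζ^i = ζ^j) : i = j := by
  by_contra hne
  wlog hlt : i < j generalizing i j
  · exact this hj hi h.symm (Ne.symm hne) (by omega)
  have h2 : ζ^i * ζ^(j-i) = ζ^i * 1 := by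
    rw [mul_one, ← pow_add, h]; congr 1; omega
  have h3 : ζ^(j-i) = 1 := mul_left_cancel₀ (pow_ne_zero _ zeta_ne_zero) h2
  exact zeta_pow_ne_one (by omega) (by omega) h3


-- unit complex numbers
lemma unit_eq_exp_arg {z : ℂ} (hz : cabs z = 1) :
    z = Complex.exp ((z.arg : ℝ) * Complex.I) := by
  conv_lhs => rw [← Complex.norm_mul_exp_arg_mul_I z]
  rw [hz, Complex.ofReal_one, one_mul]

lemma re_mul_conj_eq_cos {z w : ℂ} (hz : cabs z = 1) (hw : cabs w = 1) :
    (z * (starRingEnd ℂ) w).re = Real.cos (z.arg - w.arg) := by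
  conv_lhs => rw [unit_eq_exp_arg hz, unit_eq_exp_arg hw]
  rw [← Complex.exp_conj]
  rw [map_mul, Complex.conj_ofReal, Complex.conj_I, ← Complex.exp_add]
  have : (z.arg : ℂ) * Complex.I + (w.arg : ℂ) * -Complex.I = ((z.arg - w.arg : ℝ) : ℂ) * Complex.I := by
    push_cast; ring
  rw [this, Complex.exp_ofReal_mul_I_re]

lemma cos_le_half_abs {t : ℝ} (h : Real.cos t ≤ 1/2) : Real.pi/3 ≤ |t| := by
  by_contra hc
  push_neg at hc
  have h1 : Real.cos |t| > Real.cos (Real.pi/3) := by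
    apply Real.cos_lt_cos_of_nonneg_of_le_pi (abs_nonneg t) _ hc
    linarith [Real.pi_pos]
  rw [Real.cos_abs, Real.cos_pi_div_three] at h1
  linarith

-- separation on a line: chain bound
lemma chain_bound_aux (n : ℕ) (s : Finset ℝ) (δ : ℝ) (hδ : 0 ≤ δ)
    (hsep : ∀ x ∈ s, ∀ y ∈ s, x ≠ y → δ ≤ |x - y|) (hne : s.Nonempty) (hn : s.card = n) :
    ((s.card : ℝ) - 1) * δ ≤ s.max' hne - s.min' hne := by
  induction n generalizing s with
  | zero => simp [Finset.card_eq_zero.1 hn] at hne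
  | succ n ih =>
    rcases Nat.eq_zero_or_pos n with h0 | hpos
    · subst h0
      have := s.min'_le (s.max' hne) (s.max'_mem hne)
      rw [hn]; push_cast; simp; linarith
    · have hlt : 1 < s.card := by omega
      have hmm := Finset.min'_lt_max'_of_card s hlt
      set m := s.min' hne with hm
      have hmem : m ∈ s := s.min'_mem hne
      set s' := s.erase m with hs'
      have hne' : s'.Nonempty := by
        refine ⟨s.max' hne, Finset.mem_erase.2 ⟨ne_of_gt hmm, s.max'_mem hne⟩⟩
      have hcard' : s'.card = n := by rw [hs', Finset.card_erase_of_mem hmem]; omega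
      have hsep' : ∀ x ∈ s', ∀ y ∈ s', x ≠ y → δ ≤ |x - y| := fun x hx y hy hxy =>
        hsep x (Finset.mem_of_mem_erase hx) y (Finset.mem_of_mem_erase hy) hxy
      have ihs := ih s' hsep' hne' hcard'
      rw [hcard'] at ihs
      have hmax : s'.max' hne' = s.max' hne := by
        apply le_antisymm
        · exact s.le_max' _ (Finset.mem_of_mem_erase (s'.max'_mem hne'))
        · exact s'.le_max' _ (Finset.mem_erase.2 ⟨ne_of_gt hmm, s.max'_mem hne⟩)
      have hminstep : m + δ ≤ s'.min' hne' := by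
        have hmem' := s'.min'_mem hne'
        have hne2 : s'.min' hne' ≠ m := (Finset.mem_erase.1 hmem').1
        have hge : m ≤ s'.min' hne' := s.min'_le _ (Finset.mem_of_mem_erase hmem')
        have := hsep _ (Finset.mem_of_mem_erase hmem') m hmem hne2
        rw [_root_.abs_of_nonneg (by linarith)] at this
        linarith
      have : ((s.card : ℝ) - 1) * δ = ((n:ℝ) - 1) * δ + δ := by rw [hn]; push_cast; ring
      rw [this]
      have := s'.min'_le (s'.max' hne') (s'.max'_mem hne')
      linarith [ihs, hminstep, hmax.ge, hmax.le]

lemma chain_bound (s : Finset ℝ) (δ : ℝ) (hδ : 0 ≤ δ)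
    (hsep : ∀ x ∈ s, ∀ y ∈ s, x ≠ y → δ ≤ |x - y|) (hne : s.Nonempty) :
    ((s.card : ℝ) - 1) * δ ≤ s.max' hne - s.min' hne :=
  chain_bound_aux s.card s δ hδ hsep hne rfl

lemma packed (n : ℕ) (s : Finset ℝ) (a δ : ℝ) (hδ : 0 < δ) (hcard : s.card = n)
    (hbound : ∀ x ∈ s, a ≤ x ∧ x ≤ a + ((n : ℝ) - 1) * δ)
    (hsep : ∀ x ∈ s, ∀ y ∈ s, x ≠ y → δ ≤ |x - y|) :
    ∀ x, x ∈ s ↔ ∃ k : ℕ, k < n ∧ x = a + k * δ := by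
  induction n generalizing s a with
  | zero =>
    intro x
    simp [Finset.card_eq_zero.1 hcard]
  | succ n ih =>
    have hne : s.Nonempty := Finset.card_pos.1 (by omega)
    have hminmem := s.min'_mem hne
    have hmin : s.min' hne = a := by
      have h1 : a ≤ s.min' hne := (hbound _ hminmem).1
      have h2 : s.max' hne ≤ a + (n : ℝ) * δ := by
        have := (hbound _ (s.max'_mem hne)).2
        push_cast at this ⊢; linarith
      have h3 := chain_bound s δ (le_of_lt hδ) hsep hne
      rw [hcard] at h3
      push_cast at h3
      linarith
    set s' := s.erase (s.min' hne) with hs'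
    have hcard' : s'.card = n := by rw [hs', Finset.card_erase_of_mem hminmem]; omega
    have hbound' : ∀ x ∈ s', a + δ ≤ x ∧ x ≤ (a + δ) + ((n:ℝ) - 1) * δ := by
      intro x hx
      have hxs := Finset.mem_of_mem_erase hx
      have hxa : a ≤ x := (hbound _ hxs).1
      have hxne : x ≠ a := by rw [← hmin]; exact (Finset.mem_erase.1 hx).1
      have := hsep x hxs a (by rw [← hmin]; exact hminmem) hxne
      rw [_root_.abs_of_nonneg (by linarith)] at this
      constructor
      · linarith
      · have := (hbound _ hxs).2; push_cast at this ⊢; linarith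
    have hsep' : ∀ x ∈ s', ∀ y ∈ s', x ≠ y → δ ≤ |x - y| := fun x hx y hy =>
      hsep x (Finset.mem_of_mem_erase hx) y (Finset.mem_of_mem_erase hy)
    have ihs := ih s' (a + δ) hcard' hbound' hsep'
    intro x
    constructor
    · intro hx
      by_cases hxa : x = a
      · exact ⟨0, by omega, by simp [hxa]⟩
      · have hx' : x ∈ s' := Finset.mem_erase.2 ⟨by rw [hmin]; exact hxa, hx⟩
        obtain ⟨k, hk, hke⟩ := (ihs x).1 hx'
        exact ⟨k + 1, by omega, by rw [hke]; push_cast; ring⟩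
    · rintro ⟨k, hk, rfl⟩
      rcases Nat.eq_zero_or_pos k with h0 | hpos
      · subst h0; simpa [← hmin] using hminmem
      · have : a + k * δ = (a + δ) + ((k - 1 : ℕ) : ℝ) * δ := by
          have : ((k - 1 : ℕ) : ℝ) = (k : ℝ) - 1 := by
            have : (1:ℕ) ≤ k := hpos
            push_cast [Nat.cast_sub this]; ring
          rw [this]; ring
        rw [this]
        exact Finset.mem_of_mem_erase ((ihs _).2 ⟨k - 1, by omega, rfl⟩)


-- helpers on unit vectors
lemma re_le_half_of_dist {x y : ℂ} (hx : cabs x = 1) (hy : cabs y = 1)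
    (h : 1 ≤ cabs (x - y)) : (x * (starRingEnd ℂ) y).re ≤ 1/2 := by
  have h1 : Complex.normSq (x - y) = Complex.normSq x + Complex.normSq y -
      2 * (x * (starRingEnd ℂ) y).re := Complex.normSq_sub x y
  have hx2 : Complex.normSq x = 1 := by rw [← Complex.sq_norm, hx]; norm_num
  have hy2 : Complex.normSq y = 1 := by rw [← Complex.sq_norm, hy]; norm_num
  have h3 : 1 ≤ Complex.normSq (x - y) := by
    rw [← Complex.sq_norm]; nlinarith [norm_nonneg (x - y)]
  rw [hx2, hy2] at h1
  linarith

lemma eq_one_of_unit_re {s : ℂ} (hs : cabs s = 1) (h : s.re = 1) : s = 1 := by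
  have h1 : Complex.normSq s = 1 := by rw [← Complex.sq_norm, hs]; norm_num
  rw [Complex.normSq_apply, h] at h1
  have : s.im = 0 := by nlinarith
  apply Complex.ext <;> simp [h, this]

lemma exp_neg_pi_div_three : Complex.exp (((-(Real.pi/3)) : ℝ) * Complex.I) = ζ^5 := by
  have h1 : ((-(Real.pi/3) : ℝ) : ℂ) * Complex.I = (starRingEnd ℂ) (((Real.pi/3 : ℝ) : ℂ) * Complex.I) := by
    rw [map_mul, Complex.conj_ofReal, Complex.conj_I]
    push_cast; ring
  rw [h1, Complex.exp_conj, ← zeta_exp, zeta_pow5]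
  apply Complex.ext <;>
    simp [Complex.conj_re, Complex.conj_im, Complex.sub_re, Complex.sub_im, zeta_re, zeta_im] <;>
    norm_num

lemma image_div_mem (N : Finset ℂ) (q w : ℂ) (hw : w ≠ 0) (t : ℂ) :
    t ∈ N.image (fun z => (z - q)/w) ↔ q + w*t ∈ N := by
  rw [Finset.mem_image]
  constructor
  · rintro ⟨z, hz, rfl⟩
    have : q + w * ((z - q)/w) = z := by field_simp; ring
    rwa [this]
  · intro h
    exact ⟨q + w*t, h, by field_simp; ring⟩

/-- The hexagon rigidity lemma. -/
lemma hexagon (q : ℂ) (N : Finset ℂ) (hcard : N.card = 6)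
    (hdist : ∀ z ∈ N, cabs (z - q) = 1)
    (hsep : ∀ z ∈ N, ∀ z' ∈ N, z ≠ z' → 1 ≤ cabs (z - z')) :
    ∃ u : ℂ, cabs u = 1 ∧ ∀ j : ℕ, j < 6 → q + u * ζ^j ∈ N := by
  have hne : N.Nonempty := Finset.card_pos.1 (by omega)
  obtain ⟨z₀, hz₀⟩ := hne
  set u := z₀ - q with hu_def
  have hu : cabs u = 1 := hdist z₀ hz₀
  have hune : u ≠ 0 := by intro h; rw [h] at hu; simp at hu
  refine ⟨u, hu, ?_⟩
  set T := N.image (fun z => (z - q)/u) with hT_def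
  have hT : ∀ t, t ∈ T ↔ q + u*t ∈ N := image_div_mem N q u hune
  have hTunit : ∀ t ∈ T, cabs t = 1 := by
    intro t ht
    obtain ⟨z, hz, rfl⟩ := Finset.mem_image.1 ht
    rw [norm_div, hdist z hz, hu]; norm_num
  have hTpair : ∀ t ∈ T, ∀ t' ∈ T, t ≠ t' → (t * (starRingEnd ℂ) t').re ≤ 1/2 := by
    intro t ht t' ht' htt
    apply re_le_half_of_dist (hTunit t ht) (hTunit t' ht')
    have h1 := (hT t).1 ht
    have h2 := (hT t').1 ht'
    have hne2 : q + u*t ≠ q + u*t' := by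
      intro h; apply htt; exact mul_left_cancel₀ hune (by linear_combination h)
    have := hsep _ h1 _ h2 hne2
    have heq : cabs ((q + u*t) - (q + u*t')) = cabs (t - t') := by
      have : (q + u*t) - (q + u*t') = u * (t - t') := by ring
      rw [this, norm_mul, hu, one_mul]
    rwa [heq] at this
  have hone : (1:ℂ) ∈ T := by
    rw [hT]
    have : q + u * 1 = z₀ := by rw [hu_def]; ring
    rwa [this]
  have hTcard : T.card = 6 := by
    rw [hT_def, Finset.card_image_of_injOn, hcard]
    intro x hx y hy hxy
    field_simp at hxy
    exact sub_left_inj.mp hxy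
  set T' := T.erase 1 with hT'_def
  have hT'card : T'.card = 5 := by rw [hT'_def, Finset.card_erase_of_mem hone, hTcard]
  -- lifted angle
  set θ : ℂ → ℝ := fun t => if 0 ≤ t.arg then t.arg else t.arg + 2*Real.pi with hθ_def
  have hexp : ∀ t ∈ T, Complex.exp ((θ t : ℝ) * Complex.I) = t := by
    intro t ht
    rw [hθ_def]
    by_cases h : 0 ≤ t.arg
    · simp only [if_pos h]
      exact (unit_eq_exp_arg (hTunit t ht)).symm
    · simp only [if_neg h]
      have : ((t.arg + 2*Real.pi : ℝ) : ℂ) * Complex.I = (t.arg : ℝ) * Complex.I + (2*Real.pi : ℝ) * Complex.I := by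
        push_cast; ring
      rw [this, Complex.exp_add]
      have h2 : Complex.exp (((2*Real.pi : ℝ)) * Complex.I) = 1 := by
        have := Complex.exp_two_pi_mul_I
        convert this using 2
        push_cast; ring
      rw [h2, mul_one]
      exact (unit_eq_exp_arg (hTunit t ht)).symm
  have hθval : ∀ t : ℂ, θ t = t.arg ∨ θ t = t.arg + 2*Real.pi := by
    intro t
    rw [hθ_def]
    by_cases h : 0 ≤ t.arg
    · left; simp [h]
    · right; simp [h]
  have hcosθ : ∀ t ∈ T, ∀ t' ∈ T, Real.cos (θ t - θ t') = (t * (starRingEnd ℂ) t').re := by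
    intro t ht t' ht'
    rw [re_mul_conj_eq_cos (hTunit t ht) (hTunit t' ht')]
    rcases hθval t with h1 | h1 <;> rcases hθval t' with h2 | h2 <;> rw [h1, h2]
    · rw [show t.arg - (t'.arg + 2*Real.pi) = (t.arg - t'.arg) - 2*Real.pi by ring, Real.cos_sub_two_pi]
    · rw [show t.arg + 2*Real.pi - t'.arg = (t.arg - t'.arg) + 2*Real.pi by ring, Real.cos_add_two_pi]
    · rw [show t.arg + 2*Real.pi - (t'.arg + 2*Real.pi) = t.arg - t'.arg by ring]
  have hθbound : ∀ t ∈ T', Real.pi/3 ≤ θ t ∧ θ t ≤ Real.pi/3 + 4 * (Real.pi/3) := by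
    intro t ht
    have htT : t ∈ T := Finset.mem_of_mem_erase ht
    have htne : t ≠ 1 := (Finset.mem_erase.1 ht).1
    have hre : (t * (starRingEnd ℂ) 1).re ≤ 1/2 := hTpair t htT 1 hone htne
    have hcos : Real.cos (t.arg - Complex.arg 1) = (t * (starRingEnd ℂ) 1).re :=
      (re_mul_conj_eq_cos (hTunit t htT) (by simp)).symm
    rw [Complex.arg_one, sub_zero] at hcos
    have habs : Real.pi/3 ≤ |t.arg| := cos_le_half_abs (by rw [hcos]; exact hre)
    have harg1 := Complex.arg_le_pi t
    have harg2 := Complex.neg_pi_lt_arg t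
    have hpi := Real.pi_pos
    by_cases h : 0 ≤ t.arg
    · have hv : θ t = t.arg := by rw [hθ_def]; simp [h]
      rw [_root_.abs_of_nonneg h] at habs
      rw [hv]
      constructor <;> linarith
    · have hv : θ t = t.arg + 2*Real.pi := by rw [hθ_def]; simp [h]
      push_neg at h
      rw [_root_.abs_of_neg h] at habs
      rw [hv]
      constructor <;> linarith
  have hθsep : ∀ x ∈ T'.image θ, ∀ y ∈ T'.image θ, x ≠ y → Real.pi/3 ≤ |x - y| := by
    intro x hx y hy hxy
    obtain ⟨t, ht, rfl⟩ := Finset.mem_image.1 hx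
    obtain ⟨t', ht', rfl⟩ := Finset.mem_image.1 hy
    have htt : t ≠ t' := by intro h; exact hxy (by rw [h])
    apply cos_le_half_abs
    rw [hcosθ t (Finset.mem_of_mem_erase ht) t' (Finset.mem_of_mem_erase ht')]
    exact hTpair t (Finset.mem_of_mem_erase ht) t' (Finset.mem_of_mem_erase ht') htt
  have hθinj : Set.InjOn θ T' := by
    intro t ht t' ht' h
    rw [← hexp t (Finset.mem_of_mem_erase ht), ← hexp t' (Finset.mem_of_mem_erase ht'), h]
  have hΘcard : (T'.image θ).card = 5 := by
    rw [Finset.card_image_of_injOn hθinj, hT'card]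
  have hpi := Real.pi_pos
  have hpacked := packed 5 (T'.image θ) (Real.pi/3) (Real.pi/3) (by linarith) hΘcard
    (by
      intro x hx
      obtain ⟨t, ht, rfl⟩ := Finset.mem_image.1 hx
      have := hθbound t ht
      constructor
      · exact this.1
      · push_cast; linarith [this.2])
    hθsep
  -- now extract
  intro j hj
  rcases Nat.eq_zero_or_pos j with h0 | hjpos
  · subst h0
    have : q + u * ζ^0 = q + u * 1 := by norm_num
    rw [this]
    exact (hT 1).1 hone
  · have hjΘ : (Real.pi/3 + ((j - 1 : ℕ) : ℝ) * (Real.pi/3)) ∈ T'.image θ := by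
      rw [hpacked]
      exact ⟨j - 1, by omega, rfl⟩
    obtain ⟨t, ht, hte⟩ := Finset.mem_image.1 hjΘ
    have htval : t = ζ^j := by
      rw [← hexp t (Finset.mem_of_mem_erase ht), hte, zeta_pow_exp]
      congr 2
      have : ((j - 1 : ℕ) : ℝ) = (j : ℝ) - 1 := by
        push_cast [Nat.cast_sub hjpos]; ring
      rw [this]; ring
    rw [← htval]
    exact (hT t).1 (Finset.mem_of_mem_erase ht)


/-- Forcing core: unit vectors in the 120° arc around direction 1, pairwise 60° separated,
summing to 2, must be exactly ζ⁻¹, 1, ζ. -/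
lemma arg_exp_of_Ioc {θ : ℝ} (h : θ ∈ Set.Ioc (-Real.pi) Real.pi) :
    (Complex.exp ((θ:ℂ) * Complex.I)).arg = θ := by
  rw [Complex.exp_mul_I]
  exact Complex.arg_cos_add_sin_mul_I h

lemma forcing_core (S : Finset ℂ) (hunit : ∀ s ∈ S, cabs s = 1)
    (hpair : ∀ s ∈ S, ∀ s' ∈ S, s ≠ s' → (s * (starRingEnd ℂ) s').re ≤ 1/2)
    (hang : ∀ s ∈ S, (s * (starRingEnd ℂ) (ζ^2)).re ≤ 1/2 ∧
      (s * (starRingEnd ℂ) (ζ^3)).re ≤ 1/2 ∧ (s * (starRingEnd ℂ) (ζ^4)).re ≤ 1/2)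
    (hsum : ∑ s ∈ S, s = 2) :
    (1:ℂ) ∈ S ∧ ζ ∈ S ∧ ζ^5 ∈ S := by
  have hpi := Real.pi_pos
  have habsz : ∀ k : ℕ, cabs (ζ^k) = 1 := by
    intro k; rw [norm_pow, abs_zeta, one_pow]
  -- argument bounds
  have hargb : ∀ s ∈ S, -(Real.pi/3) ≤ s.arg ∧ s.arg ≤ Real.pi/3 := by
    intro s hs
    obtain ⟨h2, h3, h4⟩ := hang s hs
    have harg1 := Complex.arg_le_pi s
    have harg2 := Complex.neg_pi_lt_arg s
    -- arg of ζ^k computations via cos formula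
    have hc : ∀ k : ℕ, (s * (starRingEnd ℂ) (ζ^k)).re = Real.cos (s.arg - (ζ^k).arg) :=
      fun k => re_mul_conj_eq_cos (hunit s hs) (habsz k)
    have hpi3 : (0:ℝ) < Real.pi := Real.pi_pos
    have hexp2 : ζ^2 = Complex.exp (((2*Real.pi/3 : ℝ)) * Complex.I) := by
      rw [zeta_pow_exp]; congr 2; push_cast; ring
    have ha2 : (ζ^2).arg = 2*Real.pi/3 := by
      rw [hexp2, arg_exp_of_Ioc ⟨by linarith, by linarith⟩]
    have ha3 : (ζ^3).arg = Real.pi := by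
      rw [zeta_cube, Complex.arg_neg_one]
    have ha4 : (ζ^4).arg = -(2*Real.pi/3) := by
      have h45 : ζ^4 = Complex.exp (((-(2*Real.pi/3)) : ℝ) * Complex.I) := by
        rw [zeta_pow_exp]
        have heq : ((((4:ℕ):ℝ) * (Real.pi/3) : ℝ) : ℂ) * Complex.I =
            ((-(2*Real.pi/3) : ℝ) : ℂ) * Complex.I + 2*(Real.pi:ℂ)*Complex.I := by push_cast; ring
        rw [heq, Complex.exp_add, Complex.exp_two_pi_mul_I, mul_one]
      rw [h45, arg_exp_of_Ioc ⟨by linarith, by linarith⟩]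
    rw [hc 2, ha2] at h2
    rw [hc 3, ha3] at h3
    rw [hc 4, ha4] at h4
    have hb2 := cos_le_half_abs h2
    have hb3 := cos_le_half_abs h3
    have hb4' : Real.cos (s.arg + 2*Real.pi/3 - 2*Real.pi) ≤ 1/2 := by
      rw [show s.arg + 2*Real.pi/3 - 2*Real.pi = s.arg - -(2*Real.pi/3) - 2*Real.pi + 0 by ring]
      rw [add_zero, Real.cos_sub_two_pi]
      exact h4
    have hb4 : Real.pi/3 ≤ |s.arg + 2*Real.pi/3| := by
      have := cos_le_half_abs (by rw [Real.cos_sub_two_pi] at hb4'; exact hb4' :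
        Real.cos (s.arg + 2*Real.pi/3) ≤ 1/2)
      exact this
    rw [le_abs] at hb2 hb3 hb4
    constructor
    · rcases hb4 with h | h <;> linarith
    · have hs23 : s.arg ≤ 2*Real.pi/3 := by rcases hb3 with h | h <;> linarith
      rcases hb2 with h | h <;> linarith
  have hre_le : ∀ s ∈ S, s.re ≤ 1 := by
    intro s hs
    calc s.re ≤ cabs s := Complex.re_le_norm s
    _ = 1 := hunit s hs
  have hre_sum : ∑ s ∈ S, s.re = 2 := by
    rw [← Complex.re_sum, hsum]
    norm_num
  -- cardinality
  have hargs_inj : Set.InjOn Complex.arg S := by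
    intro s hs s' hs' h
    rw [unit_eq_exp_arg (hunit s hs), unit_eq_exp_arg (hunit s' hs'), h]
  have hcard_le : S.card ≤ 3 := by
    by_contra hc
    push_neg at hc
    set Θ := S.image Complex.arg with hΘ
    have hΘcard : Θ.card = S.card := Finset.card_image_of_injOn hargs_inj
    have hΘne : Θ.Nonempty := by
      rw [← Finset.card_pos, hΘcard]; omega
    have hsep : ∀ x ∈ Θ, ∀ y ∈ Θ, x ≠ y → Real.pi/3 ≤ |x - y| := by
      intro x hx y hy hxy
      obtain ⟨s, hs, rfl⟩ := Finset.mem_image.1 hx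
      obtain ⟨s', hs', rfl⟩ := Finset.mem_image.1 hy
      have hss : s ≠ s' := fun h => hxy (by rw [h])
      apply cos_le_half_abs
      rw [← re_mul_conj_eq_cos (hunit s hs) (hunit s' hs')]
      exact hpair s hs s' hs' hss
    have hchain := chain_bound Θ (Real.pi/3) (by linarith) hsep hΘne
    have hmax := Finset.mem_image.1 (Θ.max'_mem hΘne)
    have hmin := Finset.mem_image.1 (Θ.min'_mem hΘne)
    obtain ⟨s1, hs1, he1⟩ := hmax
    obtain ⟨s2, hs2, he2⟩ := hmin
    have b1 := hargb s1 hs1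
    have b2 := hargb s2 hs2
    rw [hΘcard] at hchain
    have : (4:ℝ) ≤ (S.card : ℝ) := by exact_mod_cast hc
    nlinarith [hchain, b1.1, b1.2, b2.1, b2.2]
  have hcard3 : S.card = 3 := by
    rcases (show S.card = 0 ∨ S.card = 1 ∨ S.card = 2 ∨ S.card = 3 by omega) with h|h|h|h
    · exfalso
      rw [Finset.card_eq_zero.1 h] at hsum
      simp at hsum
    · exfalso
      obtain ⟨a, rfl⟩ := Finset.card_eq_one.1 h
      rw [Finset.sum_singleton] at hsum
      have := hre_le a (Finset.mem_singleton_self a)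
      rw [hsum] at this
      norm_num at this
    · exfalso
      obtain ⟨a, b, hab, rfl⟩ := Finset.card_eq_two.1 h
      have hsum2 : a + b = 2 := by rwa [Finset.sum_pair hab] at hsum
      have hra := hre_le a (by simp)
      have hrb := hre_le b (by simp)
      have hre2 : a.re + b.re = 2 := by
        have := congrArg Complex.re hsum2
        simpa using this
      have ha1 : a = 1 := eq_one_of_unit_re (hunit a (by simp)) (by linarith)
      have hb1 : b = 1 := eq_one_of_unit_re (hunit b (by simp)) (by linarith)
      exact hab (ha1.trans hb1.symm)
    · exact h
  -- packed
  set Θ := S.image Complex.arg with hΘ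
  have hΘcard : Θ.card = 3 := by rw [hΘ, Finset.card_image_of_injOn hargs_inj, hcard3]
  have hsep : ∀ x ∈ Θ, ∀ y ∈ Θ, x ≠ y → Real.pi/3 ≤ |x - y| := by
    intro x hx y hy hxy
    obtain ⟨s, hs, rfl⟩ := Finset.mem_image.1 hx
    obtain ⟨s', hs', rfl⟩ := Finset.mem_image.1 hy
    have hss : s ≠ s' := fun h => hxy (by rw [h])
    apply cos_le_half_abs
    rw [← re_mul_conj_eq_cos (hunit s hs) (hunit s' hs')]
    exact hpair s hs s' hs' hss
  have hpacked := packed 3 Θ (-(Real.pi/3)) (Real.pi/3) (by linarith) hΘcard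
    (by
      intro x hx
      obtain ⟨s, hs, rfl⟩ := Finset.mem_image.1 hx
      have := hargb s hs
      constructor
      · exact this.1
      · push_cast; linarith [this.2])
    hsep
  have hget : ∀ k : ℕ, k < 3 → ∃ s ∈ S, s.arg = -(Real.pi/3) + k * (Real.pi/3) := by
    intro k hk
    have : (-(Real.pi/3) + (k:ℝ) * (Real.pi/3)) ∈ Θ := by
      rw [hpacked]; exact ⟨k, hk, rfl⟩
    obtain ⟨s, hs, he⟩ := Finset.mem_image.1 this
    exact ⟨s, hs, he⟩
  refine ⟨?_, ?_, ?_⟩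
  · obtain ⟨s, hs, he⟩ := hget 1 (by omega)
    have : s = 1 := by
      rw [unit_eq_exp_arg (hunit s hs), he]
      norm_num
    rwa [← this]
  · obtain ⟨s, hs, he⟩ := hget 2 (by omega)
    have : s = ζ := by
      rw [unit_eq_exp_arg (hunit s hs), he, zeta_exp]
      congr 2
      push_cast; ring
    rwa [← this]
  · obtain ⟨s, hs, he⟩ := hget 0 (by omega)
    have : s = ζ^5 := by
      rw [unit_eq_exp_arg (hunit s hs), he, ← exp_neg_pi_div_three]
      congr 2
      push_cast; ring
    rwa [← this]

/-- The forcing lemma: a point of `D` with three consecutive hexagonal neighbors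
(at angles 120°, 180°, 240° relative to `w`) has all six hexagonal neighbors. -/
lemma forcing (D : Set ℂ)
    (hmin : ∀ z ∈ D, ∀ z' ∈ D, z ≠ z' → 1 ≤ cabs (z - z'))
    (q : ℂ) (hq : q ∈ D)
    (N : Finset ℂ) (hN : ∀ z, z ∈ N ↔ z ∈ D ∧ cabs (z - q) = 1)
    (hsum : ∑ z ∈ N, (z - q) = 0)
    (w : ℂ) (hw : cabs w = 1)
    (h2 : q + w * ζ^2 ∈ D) (h3 : q + w * ζ^3 ∈ D) (h4 : q + w * ζ^4 ∈ D) :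
    ∀ j : ℕ, j < 6 → q + w * ζ^j ∈ D := by
  have habsz : ∀ k : ℕ, cabs (ζ^k) = 1 := by
    intro k; rw [norm_pow, abs_zeta, one_pow]
  have hwne : w ≠ 0 := by intro h; rw [h] at hw; simp at hw
  have memN : ∀ k : ℕ, q + w*ζ^k ∈ D → q + w*ζ^k ∈ N := by
    intro k hk
    rw [hN]
    refine ⟨hk, ?_⟩
    rw [show q + w*ζ^k - q = w * ζ^k by ring, norm_mul, hw, habsz, one_mul]
  set T := N.image (fun z => (z - q)/w) with hT_def
  have hT : ∀ t, t ∈ T ↔ q + w*t ∈ N := image_div_mem N q w hwne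
  have hTunit : ∀ t ∈ T, cabs t = 1 := by
    intro t ht
    obtain ⟨z, hz, rfl⟩ := Finset.mem_image.1 ht
    rw [norm_div, ((hN z).1 hz).2, hw]
    norm_num
  have hTD : ∀ t ∈ T, q + w*t ∈ D := fun t ht => ((hN _).1 ((hT t).1 ht)).1
  have hTpair : ∀ t ∈ T, ∀ t' ∈ T, t ≠ t' → (t * (starRingEnd ℂ) t').re ≤ 1/2 := by
    intro t ht t' ht' htt
    apply re_le_half_of_dist (hTunit t ht) (hTunit t' ht')
    have hne2 : q + w*t ≠ q + w*t' := by
      intro h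
      apply htt
      have : w * t = w * t' := by linear_combination h
      exact mul_left_cancel₀ hwne this
    have := hmin _ (hTD t ht) _ (hTD t' ht') hne2
    have heq : cabs ((q + w*t) - (q + w*t')) = cabs (t - t') := by
      rw [show (q + w*t) - (q + w*t') = w * (t - t') by ring, norm_mul, hw, one_mul]
    rwa [heq] at this
  have hsumT : ∑ t ∈ T, t = 0 := by
    rw [hT_def, Finset.sum_image (fun x hx y hy hxy => by field_simp at hxy; exact sub_left_inj.mp hxy)]
    rw [← Finset.sum_div, hsum, zero_div]
  have hm2 : ζ^2 ∈ T := (hT _).2 (memN 2 h2)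
  have hm3 : ζ^3 ∈ T := (hT _).2 (memN 3 h3)
  have hm4 : ζ^4 ∈ T := (hT _).2 (memN 4 h4)
  have hne23 : ζ^2 ≠ ζ^3 := fun h => by have := zeta_pow_inj (by omega) (by omega) h; omega
  have hne24 : ζ^2 ≠ ζ^4 := fun h => by have := zeta_pow_inj (by omega) (by omega) h; omega
  have hne34 : ζ^3 ≠ ζ^4 := fun h => by have := zeta_pow_inj (by omega) (by omega) h; omega
  set K : Finset ℂ := {ζ^2, ζ^3, ζ^4} with hK_def
  have hKT : K ⊆ T := by
    intro x hx
    rw [hK_def] at hx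
    simp only [Finset.mem_insert, Finset.mem_singleton] at hx
    rcases hx with rfl | rfl | rfl <;> assumption
  have hsumK : ∑ x ∈ K, x = -2 := by
    rw [hK_def, Finset.sum_insert (by simp [hne23, hne24]), Finset.sum_insert (by simp [hne34]),
      Finset.sum_singleton]
    rw [zeta_sq, zeta_cube, zeta_pow4]
    ring
  set S := T \ K with hS_def
  have hsumS : ∑ s ∈ S, s = 2 := by
    rw [hS_def, Finset.sum_sdiff_eq_sub hKT, hsumT, hsumK]
    ring
  have hSsub : S ⊆ T := Finset.sdiff_subset
  have hScore := forcing_core S (fun s hs => hTunit s (hSsub hs))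
    (fun s hs s' hs' h => hTpair s (hSsub hs) s' (hSsub hs') h)
    (by
      intro s hs
      have hsK : s ∉ K := (Finset.mem_sdiff.1 hs).2
      have hsne : ∀ k ∈ K, s ≠ k := fun k hk h => hsK (h ▸ hk)
      refine ⟨?_, ?_, ?_⟩ <;>
        [exact hTpair s (hSsub hs) _ hm2 (hsne _ (by simp [hK_def]));
         exact hTpair s (hSsub hs) _ hm3 (hsne _ (by simp [hK_def]));
         exact hTpair s (hSsub hs) _ hm4 (hsne _ (by simp [hK_def]))]
      )
    hsumS
  obtain ⟨hS1, hSζ, hS5⟩ := hScore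
  intro j hj
  interval_cases j
  · have : (1:ℂ) ∈ T := hSsub hS1
    have := hTD 1 this
    rwa [pow_zero]
  · have : ζ ∈ T := hSsub hSζ
    have := hTD ζ this
    rwa [pow_one]
  · exact h2
  · exact h3
  · exact h4
  · exact hTD _ (hSsub hS5)


/-- Every complex number is within distance < 1 of the triangular lattice. -/
lemma near_lattice (y : ℂ) : ∃ a b : ℤ, cabs (y - ((a:ℂ) + (b:ℂ) * ζ)) < 1 := by
  set t : ℝ := y.im / (Real.sqrt 3 / 2) with ht_def
  set s : ℝ := y.re - t/2 with hs_def
  have hy : y = (s : ℂ) + (t : ℂ) * ζ := by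
    apply Complex.ext
    · simp [Complex.add_re, Complex.mul_re, zeta_re, zeta_im, hs_def]
      ring
    · have h3 : Real.sqrt 3 / 2 ≠ 0 := by positivity
      simp only [Complex.add_im, Complex.mul_im, Complex.ofReal_re, Complex.ofReal_im, zeta_re, zeta_im, ht_def]
      rw [div_mul_cancel₀ _ h3]
      ring
  refine ⟨round s, round t, ?_⟩
  set p : ℝ := s - round s with hp_def
  set q : ℝ := t - round t with hq_def
  have hp : |p| ≤ 1/2 := abs_sub_round s
  have hq : |q| ≤ 1/2 := abs_sub_round t
  have hdec : y - (((round s : ℤ):ℂ) + ((round t : ℤ):ℂ) * ζ) = (p : ℂ) + (q : ℂ) * ζ := by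
    rw [hy, hp_def, hq_def]
    push_cast
    ring
  rw [hdec]
  have hns : Complex.normSq ((p:ℂ) + (q:ℂ)*ζ) = p^2 + p*q + q^2 := by
    simp [Complex.normSq_apply, Complex.add_re, Complex.add_im, Complex.mul_re, Complex.mul_im,
      zeta_re, zeta_im]
    nlinarith [sqrt3_sq]
  have hple : p^2 ≤ (1/2)^2 := sq_le_sq' (by linarith [abs_le.1 hp]) (by linarith [abs_le.1 hp])
  have hqle : q^2 ≤ (1/2)^2 := sq_le_sq' (by linarith [abs_le.1 hq]) (by linarith [abs_le.1 hq])
  have hbound : Complex.normSq ((p:ℂ) + (q:ℂ)*ζ) ≤ 3/4 := by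
    rw [hns]
    nlinarith [sq_nonneg (p + q), sq_nonneg (p - q)]
  have := Complex.sq_norm ((p:ℂ) + (q:ℂ)*ζ)
  nlinarith [norm_nonneg ((p:ℂ) + (q:ℂ)*ζ)]

/-- The core theorem at the level of ℂ. -/
theorem core (D : Set ℂ)
    (hmin : ∀ z ∈ D, ∀ z' ∈ D, z ≠ z' → 1 ≤ cabs (z - z'))
    (hbal : ∀ q ∈ D, ∃ N : Finset ℂ,
      (∀ z, z ∈ N ↔ z ∈ D ∧ cabs (z - q) = 1) ∧ ∑ z ∈ N, (z - q) = 0)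
    (h0 : (0:ℂ) ∈ D)
    (h6 : ∃ N : Finset ℂ, (∀ z, z ∈ N ↔ z ∈ D ∧ cabs (z - 0) = 1) ∧ N.card = 6) :
    ∃ u : ℂ, cabs u = 1 ∧
      D = {z | ∃ a b : ℤ, z = (a:ℂ) * u + (b:ℂ) * (u * ζ)} := by
  obtain ⟨N₀, hN₀, hcard₀⟩ := h6
  obtain ⟨u, hu, hhex⟩ := hexagon 0 N₀ hcard₀
    (fun z hz => by simpa using ((hN₀ z).1 hz).2)
    (fun z hz z' hz' h => hmin z ((hN₀ z).1 hz).1 z' ((hN₀ z').1 hz').1 h)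
  have hune : u ≠ 0 := by intro h; rw [h] at hu; simp at hu
  refine ⟨u, hu, ?_⟩
  -- Good points
  set Good : ℂ → Prop := fun z => z ∈ D ∧ ∀ k : ℕ, k < 6 → z + u * ζ^k ∈ D with hGood_def
  have good_all : ∀ z, Good z → ∀ k : ℕ, z + u * ζ^k ∈ D := by
    intro z hz k
    rw [zeta_pow_mod]
    exact hz.2 (k % 6) (Nat.mod_lt _ (by omega))
  have good0 : Good 0 := by
    refine ⟨h0, fun k hk => ?_⟩
    have := hhex k hk
    have hD := ((hN₀ _).1 this).1
    simpa using hD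
  have h1z2 : (1:ℂ) + ζ^2 = ζ := by rw [zeta_sq]; ring
  have h1z4 : (1:ℂ) + ζ^4 = ζ^5 := by rw [zeta_pow4, zeta_pow5]; ring
  have step : ∀ z, Good z → ∀ k : ℕ, Good (z + u * ζ^k) := by
    intro z hz k
    set q := z + u * ζ^k with hq_def
    set w := u * ζ^k with hw_def
    have hw : cabs w = 1 := by
      rw [hw_def, norm_mul, hu, norm_pow, abs_zeta, one_pow, mul_one]
    have hq : q ∈ D := good_all z hz k
    obtain ⟨N, hN, hsum⟩ := hbal q hq
    have h2 : q + w * ζ^2 ∈ D := by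
      have : q + w * ζ^2 = z + u * ζ^(k+1) := by
        rw [hq_def, hw_def, pow_succ]
        linear_combination u * ζ^k * h1z2
      rw [this]; exact good_all z hz (k+1)
    have h3 : q + w * ζ^3 ∈ D := by
      have : q + w * ζ^3 = z := by
        rw [hq_def, hw_def, zeta_cube]; ring
      rw [this]; exact hz.1
    have h4 : q + w * ζ^4 ∈ D := by
      have : q + w * ζ^4 = z + u * ζ^(k+5) := by
        rw [hq_def, hw_def, pow_add]
        linear_combination u * ζ^k * h1z4
      rw [this]; exact good_all z hz (k+5)
    have hforce := forcing D hmin q hq N hN hsum w hw h2 h3 h4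
    refine ⟨hq, fun m hm => ?_⟩
    set j : ℕ := (m + 6 - k % 6) % 6 with hj_def
    have hj6 : j < 6 := Nat.mod_lt _ (by omega)
    have hzz : ζ^(k+j) = ζ^m := by
      rw [zeta_pow_mod (k+j), zeta_pow_mod m]
      congr 1
      omega
    have : q + u * ζ^m = q + w * ζ^j := by
      rw [hw_def, mul_assoc, ← pow_add, hzz]
    rw [this]
    exact hforce j hj6
  -- all lattice points are good
  have key : ∀ n : ℕ, ∀ a b : ℤ, a.natAbs + b.natAbs = n →
      Good ((a:ℂ) * u + (b:ℂ) * (u * ζ)) := by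
    intro n
    induction n using Nat.strong_induction_on with
    | _ n ih =>
      intro a b hab
      rcases Int.lt_trichotomy a 0 with ha | ha | ha
      · have hprev := ih (((a+1).natAbs + b.natAbs)) (by omega) (a+1) b rfl
        have hstep := step _ hprev 3
        have : ((a+1:ℤ):ℂ) * u + (b:ℂ) * (u * ζ) + u * ζ^3 = (a:ℂ) * u + (b:ℂ) * (u * ζ) := by
          rw [zeta_cube]; push_cast; ring
        rwa [this] at hstep
      · subst ha
        rcases Int.lt_trichotomy b 0 with hb | hb | hb
        · have hprev := ih ((0:ℤ).natAbs + (b+1).natAbs) (by omega) 0 (b+1) rfl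
          have hstep := step _ hprev 4
          have : ((0:ℤ):ℂ) * u + ((b+1:ℤ):ℂ) * (u * ζ) + u * ζ^4 =
              ((0:ℤ):ℂ) * u + (b:ℂ) * (u * ζ) := by
            rw [zeta_pow4]; push_cast; ring
          rwa [this] at hstep
        · subst hb
          simpa using good0
        · have hprev := ih ((0:ℤ).natAbs + (b-1).natAbs) (by omega) 0 (b-1) rfl
          have hstep := step _ hprev 1
          have : ((0:ℤ):ℂ) * u + ((b-1:ℤ):ℂ) * (u * ζ) + u * ζ^1 =
              ((0:ℤ):ℂ) * u + (b:ℂ) * (u * ζ) := by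
            push_cast; ring
          rwa [this] at hstep
      · have hprev := ih (((a-1).natAbs + b.natAbs)) (by omega) (a-1) b rfl
        have hstep := step _ hprev 0
        have : ((a-1:ℤ):ℂ) * u + (b:ℂ) * (u * ζ) + u * ζ^0 = (a:ℂ) * u + (b:ℂ) * (u * ζ) := by
          push_cast; ring
        rwa [this] at hstep
  have lat_mem : ∀ a b : ℤ, (a:ℂ) * u + (b:ℂ) * (u * ζ) ∈ D :=
    fun a b => (key _ a b rfl).1
  apply Set.eq_of_subset_of_subset
  · -- D ⊆ lattice
    intro x hx
    set y := x / u with hy_def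
    obtain ⟨a, b, hab⟩ := near_lattice y
    have hxl : cabs (x - ((a:ℂ) * u + (b:ℂ) * (u * ζ))) < 1 := by
      have : x - ((a:ℂ) * u + (b:ℂ) * (u * ζ)) = u * (y - ((a:ℂ) + (b:ℂ) * ζ)) := by
        rw [hy_def]
        field_simp
      rw [this, norm_mul, hu, one_mul]
      exact hab
    have hlD := lat_mem a b
    by_cases hxe : x = (a:ℂ) * u + (b:ℂ) * (u * ζ)
    · exact ⟨a, b, hxe⟩
    · exfalso
      have := hmin x hx _ hlD hxe
      linarith
  · rintro x ⟨a, b, rfl⟩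
    exact lat_mem a b


end Tri

open Tri RealInnerProductSpace in
theorem six_neighbors_triangular_lattice' (C : Set (EuclideanSpace ℝ (Fin 2)))
    (hbal : ∀ P ∈ C, ∀ d : ℝ, 0 < d →
      {x ∈ C | dist x P = d}.Finite ∧ ∑ᶠ x ∈ {x ∈ C | dist x P = d}, (x - P) = 0)
    (hmin : (∀ x ∈ C, ∀ y ∈ C, x ≠ y → 1 ≤ dist x y))
    (P : EuclideanSpace ℝ (Fin 2)) (hP : P ∈ C)
    (h6 : {x ∈ C | dist x P = 1}.encard = 6) :
    ∃ u v : EuclideanSpace ℝ (Fin 2), ‖u‖ = 1 ∧ ‖v‖ = 1 ∧ ⟪u, v⟫ = 1 / 2 ∧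
      C = {x | ∃ a b : ℤ, x = P + (a : ℝ) • u + (b : ℝ) • v} := by
  set e : EuclideanSpace ℝ (Fin 2) ≃ₗᵢ[ℝ] ℂ := Complex.orthonormalBasisOneI.repr.symm with he_def
  set f : EuclideanSpace ℝ (Fin 2) → ℂ := fun x => e x - e P with hf_def
  have hfdist : ∀ x y, cabs (f x - f y) = dist x y := by
    intro x y
    rw [hf_def]
    simp only
    rw [show (e x - e P) - (e y - e P) = e x - e y by ring,
      ← map_sub e, e.norm_map, dist_eq_norm]
  have hfinj : Function.Injective f := by
    intro x y h
    rw [hf_def] at h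
    simp only at h
    have : e x = e y := by linear_combination h
    exact e.injective this
  set D : Set ℂ := f '' C with hD_def
  have hmemD : ∀ x ∈ C, f x ∈ D := fun x hx => ⟨x, hx, rfl⟩
  have hminD : ∀ z ∈ D, ∀ z' ∈ D, z ≠ z' → 1 ≤ cabs (z - z') := by
    rintro z ⟨x, hx, rfl⟩ z' ⟨y, hy, rfl⟩ hne
    rw [hfdist]
    exact hmin x hx y hy (fun h => hne (by rw [h]))
  have hbalD : ∀ q ∈ D, ∃ N : Finset ℂ,
      (∀ z, z ∈ N ↔ z ∈ D ∧ cabs (z - q) = 1) ∧ ∑ z ∈ N, (z - q) = 0 := by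
    rintro q ⟨Q, hQ, rfl⟩
    obtain ⟨hfin, hfsum⟩ := hbal Q hQ 1 one_pos
    have hsumF : ∑ x ∈ hfin.toFinset, (x - Q) = 0 := by
      rw [← finsum_mem_coe_finset, Set.Finite.coe_toFinset hfin]
      exact hfsum
    refine ⟨hfin.toFinset.image f, ?_, ?_⟩
    · intro z
      constructor
      · intro hz
        obtain ⟨x, hx, rfl⟩ := Finset.mem_image.1 hz
        rw [Set.Finite.mem_toFinset hfin] at hx
        obtain ⟨hxC, hxd⟩ := hx
        exact ⟨hmemD x hxC, by rw [hfdist]; exact hxd⟩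
      · rintro ⟨⟨x, hx, rfl⟩, hd⟩
        rw [hfdist] at hd
        exact Finset.mem_image_of_mem f ((Set.Finite.mem_toFinset hfin).2 ⟨hx, hd⟩)
    · rw [Finset.sum_image (fun x _ y _ h => hfinj h)]
      have : ∀ x ∈ hfin.toFinset, f x - f Q = e (x - Q) := by
        intro x _
        rw [hf_def]
        simp only
        rw [map_sub e]
        ring
      rw [Finset.sum_congr rfl this, ← map_sum, hsumF, map_zero]
  have hfP : f P = 0 := by rw [hf_def]; simp
  have h0D : (0:ℂ) ∈ D := by rw [← hfP]; exact hmemD P hP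
  obtain ⟨hfinP, -⟩ := hbal P hP 1 one_pos
  have hcardP : hfinP.toFinset.card = 6 := by
    have := hfinP.encard_eq_coe_toFinset_card
    rw [h6] at this
    exact_mod_cast this.symm
  have h6D : ∃ N : Finset ℂ, (∀ z, z ∈ N ↔ z ∈ D ∧ cabs (z - 0) = 1) ∧ N.card = 6 := by
    refine ⟨hfinP.toFinset.image f, ?_, ?_⟩
    · intro z
      constructor
      · intro hz
        obtain ⟨x, hx, rfl⟩ := Finset.mem_image.1 hz
        rw [Set.Finite.mem_toFinset hfinP] at hx
        obtain ⟨hxC, hxd⟩ := hx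
        refine ⟨hmemD x hxC, ?_⟩
        rw [show f x - 0 = f x - f P by rw [hfP], hfdist]
        exact hxd
      · rintro ⟨⟨x, hx, rfl⟩, hd⟩
        rw [show f x - 0 = f x - f P by rw [hfP], hfdist] at hd
        exact Finset.mem_image_of_mem f ((Set.Finite.mem_toFinset hfinP).2 ⟨hx, hd⟩)
    · rw [Finset.card_image_of_injective _ hfinj, hcardP]
  obtain ⟨u', hu', hDlat⟩ := core D hminD hbalD h0D h6D
  set u := e.symm u' with hu_def
  set v := e.symm (u' * ζ) with hv_def
  have heu : e u = u' := e.apply_symm_apply u'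
  have hev : e v = u' * ζ := e.apply_symm_apply (u' * ζ)
  have habs_uz : cabs (u' * ζ) = 1 := by rw [norm_mul, hu', abs_zeta, mul_one]
  have hnormSq : Complex.normSq u' = 1 := by
    rw [← Complex.sq_norm, hu']; norm_num
  refine ⟨u, v, ?_, ?_, ?_, ?_⟩
  · rw [hu_def, e.symm.norm_map, hu']
  · rw [hv_def, e.symm.norm_map, habs_uz]
  · rw [hu_def, hv_def, e.symm.inner_map_map, Complex.inner]
    rw [show u' * ζ * (starRingEnd ℂ) u' = ((starRingEnd ℂ) u' * u') * ζ by ring]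
    rw [← Complex.normSq_eq_conj_mul_self, hnormSq]
    simp [zeta_re]
  · have hkey : ∀ (x : EuclideanSpace ℝ (Fin 2)) (a b : ℤ),
        x = P + (a:ℝ) • u + (b:ℝ) • v ↔ f x = (a:ℂ) * u' + (b:ℂ) * (u' * ζ) := by
      intro x a b
      constructor
      · intro h
        rw [hf_def]
        simp only
        rw [h, map_add, map_add, map_smul, map_smul, heu, hev]
        rw [Complex.real_smul, Complex.real_smul]
        push_cast
        ring
      · intro h
        apply e.injective
        rw [map_add, map_add, map_smul, map_smul, heu, hev]
        rw [hf_def] at h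
        simp only at h
        rw [Complex.real_smul, Complex.real_smul]
        push_cast
        push_cast at h
        linear_combination h
    apply Set.eq_of_subset_of_subset
    · intro x hx
      have hfx : f x ∈ D := hmemD x hx
      rw [hDlat] at hfx
      obtain ⟨a, b, hab⟩ := hfx
      exact ⟨a, b, (hkey x a b).2 hab⟩
    · rintro x ⟨a, b, hab⟩
      have hfx : f x ∈ D := by
        rw [hDlat]
        exact ⟨a, b, (hkey x a b).1 hab⟩
      obtain ⟨y, hy, hyx⟩ := hfx
      rwa [← hfinj hyx]

end TriangularLatticeProof

/-- If some point of a balanced configuration with minimal distance 1 has exactly 6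
neighbors, then the configuration is a triangular lattice: there are unit vectors `u, v`
with `⟪u,v⟫ = 1/2` such that `C = {P + a·u + b·v : a, b ∈ ℤ}`. -/
theorem six_neighbors_triangular_lattice (C : Set E2)
    (hbal : IsBalanced C) (hmin : MinDistOne C)
    (P : E2) (hP : P ∈ C) (h6 : (nbrs C P).encard = 6) :
    ∃ u v : E2, ‖u‖ = 1 ∧ ‖v‖ = 1 ∧ ⟪u, v⟫ = 1 / 2 ∧
      C = {x | ∃ a b : ℤ, x = P + (a : ℝ) • u + (b : ℝ) • v} := by
  exact six_neighbors_triangular_lattice' C hbal hmin.1 P hP h6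
end
end

section
/- Let P ∈ ℝ² and let u, v ∈ ℝ² be linearly independent vectors. Then the set C = {P + (a·u + b·v)/2 : a, b ∈ ℤ, not both a and b odd}, consisting of the vertices and edge midpoints of the lattice parallelogram tiling generated by u and v, is a balanced configuration: for every point x ∈ C and every d > 0, the set of points of C at distance d from x is finite and the vectors from x to these points sum to zero. -/
open EuclideanGeometry RealInnerProductSpace

noncomputable section

/-- The vertices together with the edge midpoints of a lattice parallelogram tiling form a
balanced configuration. -/
theorem lattice_with_midpoints_is_balanced (P u v : E2)
    (huv : LinearIndependent ℝ ![u, v]) :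
    IsBalanced {x | ∃ a b : ℤ, ¬(Odd a ∧ Odd b) ∧
      x = P + ((a : ℝ) / 2) • u + ((b : ℝ) / 2) • v} := by
  intro Q hQ d hd
  obtain ⟨a₀, b₀, hpar₀, hQeq⟩ := hQ
  set C : Set E2 := {x | ∃ a b : ℤ, ¬(Odd a ∧ Odd b) ∧
      x = P + ((a : ℝ) / 2) • u + ((b : ℝ) / 2) • v} with hCdef
  set S : Set E2 := {x ∈ C | dist x Q = d} with hSdef
  -- the linear map sending coordinates to the plane
  let L : (Fin 2 → ℝ) →ₗ[ℝ] E2 :=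
    { toFun := fun c => c 0 • u + c 1 • v
      map_add' := by
        intro x y
        simp only [Pi.add_apply, add_smul]
        abel
      map_smul' := by
        intro r x
        simp only [Pi.smul_apply, smul_eq_mul, RingHom.id_apply, smul_add, smul_smul] }
  have hLapp : ∀ s t : ℝ, L ![s, t] = s • u + t • v := by
    intro s t
    simp [L]
  have hinj : Function.Injective L := by
    rw [← LinearMap.ker_eq_bot, LinearMap.ker_eq_bot']
    intro c hc
    have h0 : ∑ i, c i • ![u, v] i = 0 := by
      rw [Fin.sum_univ_two]
      simpa [L] using hc
    have := Fintype.linearIndependent_iff.mp huv c h0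
    funext i
    exact this i
  have hCE := LinearMap.isClosedEmbedding_of_injective (LinearMap.ker_eq_bot.mpr hinj) (f := L)
  -- key: points of C decompose; vector from Q
  have hvec : ∀ c e : ℤ,
      (P + ((c : ℝ) / 2) • u + ((e : ℝ) / 2) • v) - Q
        = L ![((c : ℝ) - a₀) / 2, ((e : ℝ) - b₀) / 2] := by
    intro c e
    rw [hLapp, hQeq]
    module
  -- finiteness
  have hK : IsCompact (L ⁻¹' Metric.closedBall (0 : E2) d) :=
    hCE.isCompact_preimage (isCompact_closedBall 0 d)
  obtain ⟨R, hR⟩ := hK.isBounded.subset_closedBall 0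
  set M : ℤ := ⌈2 * R⌉ with hM
  have hcoordbound : ∀ c e : ℤ, ∀ x : E2,
      x = P + ((c : ℝ) / 2) • u + ((e : ℝ) / 2) • v → dist x Q = d →
      |c - a₀| ≤ M ∧ |e - b₀| ≤ M := by
    intro c e x hx hdist
    have hx' : x - Q = L ![((c : ℝ) - a₀) / 2, ((e : ℝ) - b₀) / 2] := by
      rw [hx]; exact hvec c e
    have hmem : (![((c : ℝ) - a₀) / 2, ((e : ℝ) - b₀) / 2] : Fin 2 → ℝ)
        ∈ L ⁻¹' Metric.closedBall (0 : E2) d := by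
      simp only [Set.mem_preimage, Metric.mem_closedBall, dist_zero_right]
      rw [← hx', ← dist_eq_norm, hdist]
    have hnorm := hR hmem
    rw [Metric.mem_closedBall, dist_zero_right] at hnorm
    have h0 : |(((c : ℝ) - a₀) / 2)| ≤ R := by
      have := norm_le_pi_norm (![((c : ℝ) - a₀) / 2, ((e : ℝ) - b₀) / 2]) 0
      simp only [Matrix.cons_val_zero, Real.norm_eq_abs] at this
      linarith
    have h1 : |(((e : ℝ) - b₀) / 2)| ≤ R := by
      have := norm_le_pi_norm (![((c : ℝ) - a₀) / 2, ((e : ℝ) - b₀) / 2]) 1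
      simp only [Matrix.cons_val_one, Matrix.cons_val_zero, Matrix.head_cons, Real.norm_eq_abs] at this
      linarith
    have hM' : (2 * R : ℝ) ≤ M := Int.le_ceil _
    constructor
    · have : |((c : ℝ) - a₀)| ≤ 2 * R := by
        rw [abs_div] at h0
        simp only [abs_two] at h0
        linarith [abs_nonneg ((c:ℝ) - a₀)]
      have : |((c - a₀ : ℤ) : ℝ)| ≤ (M : ℝ) := by push_cast; linarith
      exact_mod_cast this
    · have : |((e : ℝ) - b₀)| ≤ 2 * R := by
        rw [abs_div] at h1
        simp only [abs_two] at h1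
        linarith [abs_nonneg ((e:ℝ) - b₀)]
      have : |((e - b₀ : ℤ) : ℝ)| ≤ (M : ℝ) := by push_cast; linarith
      exact_mod_cast this
  have hfin : S.Finite := by
    have hsub : S ⊆ (fun p : ℤ × ℤ => P + ((p.1 : ℝ) / 2) • u + ((p.2 : ℝ) / 2) • v) ''
        ((Finset.Icc (a₀ - M) (a₀ + M) ×ˢ Finset.Icc (b₀ - M) (b₀ + M) : Finset (ℤ × ℤ)) : Set (ℤ × ℤ)) := by
      rintro x ⟨⟨c, e, hpar, hx⟩, hdist⟩
      obtain ⟨hc, he⟩ := hcoordbound c e x hx hdist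
      refine ⟨(c, e), ?_, hx.symm⟩
      simp only [Finset.coe_product, Set.mem_prod, Finset.mem_coe, Finset.mem_Icc]
      rw [abs_le] at hc he
      constructor <;> omega
    exact Set.Finite.subset (Set.Finite.image _ (Finset.finite_toSet _)) hsub
  refine ⟨hfin, ?_⟩
  rw [finsum_mem_eq_finite_toFinset_sum _ hfin]
  set F := hfin.toFinset with hF
  -- point reflection
  have hrefl : ∀ x ∈ F, Q + (Q - x) ∈ F := by
    intro x hx
    rw [hF, Set.Finite.mem_toFinset] at hx ⊢
    obtain ⟨⟨c, e, hpar, hx⟩, hdist⟩ := hx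
    constructor
    · refine ⟨2 * a₀ - c, 2 * b₀ - e, ?_, ?_⟩
      · simp only [Int.odd_iff] at hpar ⊢
        omega
      · rw [hx, hQeq]
        push_cast
        module
    · rw [dist_eq_norm] at hdist ⊢
      have : Q + (Q - x) - Q = -(x - Q) := by abel
      rw [this, norm_neg]
      exact hdist
  have hsum : ∑ x ∈ F, (x - Q) = ∑ x ∈ F, -(x - Q) := by
    refine Finset.sum_nbij' (fun x => Q + (Q - x)) (fun x => Q + (Q - x))
      hrefl hrefl ?_ ?_ ?_
    · intro a _; module
    · intro a _; module
    · intro a _; module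
  rw [Finset.sum_neg_distrib] at hsum
  have h2 : (2 : ℝ) • ∑ x ∈ F, (x - Q) = 0 := by
    rw [two_smul]
    nth_rewrite 2 [hsum]
    abel
  have := smul_eq_zero.mp h2
  rcases this with h | h
  · norm_num at h
  · exact h
end
end

section
/- Let P ∈ ℝ² and let u, v ∈ ℝ² satisfy ‖u‖ = ‖v‖ = √3 and ⟨u,v⟩ = 3/2. Then the set C = {P + a·u + b·v + ε·(u+v)/3 : a, b ∈ ℤ, ε ∈ {0,1}}, which is the vertex set of a regular hexagon tiling with side length 1, is a balanced configuration: for every point x ∈ C and every d > 0, the set of points of C at distance d from x is finite and the vectors from x to these points sum to zero. -/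
open EuclideanGeometry RealInnerProductSpace

noncomputable section

set_option maxHeartbeats 1000000 in
/-- The vertex set of a regular hexagon tiling with side 1 is a balanced configuration. -/
theorem hexagon_vertices_are_balanced (P u v : E2)
    (hu : ‖u‖ = Real.sqrt 3) (hv : ‖v‖ = Real.sqrt 3) (huv : ⟪u, v⟫ = 3 / 2) :
    IsBalanced {x | ∃ a b : ℤ, ∃ ε : ℝ, (ε = 0 ∨ ε = 1) ∧
      x = P + (a : ℝ) • u + (b : ℝ) • v + (ε / 3) • (u + v)} := by
  set Cs : Set E2 := {x | ∃ a b : ℤ, ∃ ε : ℝ, (ε = 0 ∨ ε = 1) ∧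
      x = P + (a : ℝ) • u + (b : ℝ) • v + (ε / 3) • (u + v)} with hCs
  intro Q hQ d hd
  obtain ⟨a₀, b₀, ε₀, hε₀, hQr⟩ := hQ
  have hu2 : ⟪u, u⟫ = 3 := by
    rw [real_inner_self_eq_norm_sq, hu, Real.sq_sqrt]; norm_num
  have hv2 : ⟪v, v⟫ = 3 := by
    rw [real_inner_self_eq_norm_sq, hv, Real.sq_sqrt]; norm_num
  have hvu : ⟪v, u⟫ = 3 / 2 := by rw [real_inner_comm]; exact huv
  set co1 : E2 → ℝ := fun x => (4 * ⟪x - Q, u⟫ - 2 * ⟪x - Q, v⟫) / 9 with hco1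
  set co2 : E2 → ℝ := fun x => (4 * ⟪x - Q, v⟫ - 2 * ⟪x - Q, u⟫) / 9 with hco2
  have hcoord : ∀ α β : ℝ, co1 (Q + α • u + β • v) = α ∧ co2 (Q + α • u + β • v) = β := by
    intro α β
    have h : (Q + α • u + β • v) - Q = α • u + β • v := by abel
    constructor <;>
    · simp only [hco1, hco2, h, inner_add_left, real_inner_smul_left, hu2, hv2, huv, hvu]
      ring
  have hns : ∀ α β : ℝ, dist (Q + α • u + β • v) Q = Real.sqrt (3 * (α^2 + β^2 + α * β)) := by
    intro α β
    have h : (Q + α • u + β • v) - Q = α • u + β • v := by abel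
    rw [dist_eq_norm, h, norm_eq_sqrt_real_inner]
    congr 1
    simp only [inner_add_left, inner_add_right, real_inner_smul_left, real_inner_smul_right,
      hu2, hv2, huv, hvu]
    ring
  set φ : E2 → E2 := fun x => Q + (-co1 x - co2 x) • u + (co1 x) • v with hφ
  set ψ : E2 → E2 := fun x => Q + (co2 x) • u + (-co1 x - co2 x) • v with hψ
  have hmain : ∀ x ∈ Cs, x = Q + co1 x • u + co2 x • v ∧ φ x ∈ Cs ∧ ψ x ∈ Cs := by
    rintro x ⟨a, b, ε, hε, hxr⟩
    have hx : x = Q + ((a:ℝ) - a₀ + (ε - ε₀)/3) • u + ((b:ℝ) - b₀ + (ε - ε₀)/3) • v := by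
      rw [hxr, hQr]; module
    have hc1 : co1 x = (a:ℝ) - a₀ + (ε - ε₀)/3 := by rw [hx]; exact (hcoord _ _).1
    have hc2 : co2 x = (b:ℝ) - b₀ + (ε - ε₀)/3 := by rw [hx]; exact (hcoord _ _).2
    refine ⟨by rw [hc1, hc2]; exact hx, ?_, ?_⟩
    · simp only [hφ, hc1, hc2, hCs, Set.mem_setOf_eq]
      rcases hε with hε | hε <;> rcases hε₀ with hε₀ | hε₀ <;> subst hε <;> subst hε₀
      · exact ⟨2*a₀ + b₀ - a - b, b₀ + a - a₀, 0, Or.inl rfl, by rw [hQr]; push_cast; module⟩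
      · exact ⟨2*a₀ + b₀ - a - b + 1, b₀ + a - a₀, 0, Or.inl rfl, by rw [hQr]; push_cast; module⟩
      · exact ⟨2*a₀ + b₀ - a - b - 1, b₀ + a - a₀, 1, Or.inr rfl, by rw [hQr]; push_cast; module⟩
      · exact ⟨2*a₀ + b₀ - a - b, b₀ + a - a₀, 1, Or.inr rfl, by rw [hQr]; push_cast; module⟩
    · simp only [hψ, hc1, hc2, hCs, Set.mem_setOf_eq]
      rcases hε with hε | hε <;> rcases hε₀ with hε₀ | hε₀ <;> subst hε <;> subst hε₀
      · exact ⟨a₀ + b - b₀, 2*b₀ + a₀ - a - b, 0, Or.inl rfl, by rw [hQr]; push_cast; module⟩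
      · exact ⟨a₀ + b - b₀, 2*b₀ + a₀ - a - b + 1, 0, Or.inl rfl, by rw [hQr]; push_cast; module⟩
      · exact ⟨a₀ + b - b₀, 2*b₀ + a₀ - a - b - 1, 1, Or.inr rfl, by rw [hQr]; push_cast; module⟩
      · exact ⟨a₀ + b - b₀, 2*b₀ + a₀ - a - b, 1, Or.inr rfl, by rw [hQr]; push_cast; module⟩
  have hdmap : ∀ x ∈ Cs, ∀ e : ℝ, dist x Q = e → dist (φ x) Q = e ∧ dist (ψ x) Q = e := by
    intro x hx e he
    have hc := (hmain x hx).1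
    have h2 : dist x Q = Real.sqrt (3 * ((co1 x)^2 + (co2 x)^2 + co1 x * co2 x)) := by
      conv_lhs => rw [hc]
      rw [hns]
    constructor
    · simp only [hφ]
      rw [hns, ← he, h2]
      congr 1; ring
    · simp only [hψ]
      rw [hns, ← he, h2]
      congr 1; ring
  -- finiteness
  have hbound : ∀ x ∈ Cs, dist x Q = d → |co1 x| ≤ 2*d ∧ |co2 x| ≤ 2*d := by
    intro x hx hxd
    have hn : ‖x - Q‖ = d := by rw [← dist_eq_norm]; exact hxd
    have h1 : |⟪x - Q, u⟫| ≤ 2*d := by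
      have h := abs_real_inner_le_norm (x - Q) u
      rw [hn, hu] at h
      nlinarith [Real.sqrt_nonneg 3, Real.sq_sqrt (show (0:ℝ) ≤ 3 by norm_num)]
    have h2 : |⟪x - Q, v⟫| ≤ 2*d := by
      have h := abs_real_inner_le_norm (x - Q) v
      rw [hn, hv] at h
      nlinarith [Real.sqrt_nonneg 3, Real.sq_sqrt (show (0:ℝ) ≤ 3 by norm_num)]
    rw [abs_le] at h1 h2
    constructor <;>
    · simp only [hco1, hco2]
      rw [abs_le]
      constructor <;> linarith [h1.1, h1.2, h2.1, h2.2, hd.le]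
  set M : ℤ := |a₀| + |b₀| + ⌈2*d⌉ + 1 with hM
  have hfin : {x ∈ Cs | dist x Q = d}.Finite := by
    refine Set.Finite.subset (Set.Finite.image
      (fun t : ℤ × ℤ × ℤ => P + (t.1:ℝ) • u + (t.2.1:ℝ) • v + ((t.2.2:ℝ)/3) • (u + v))
      (Finset.Icc (-M) M ×ˢ Finset.Icc (-M) M ×ˢ ({0,1} : Finset ℤ)).finite_toSet) ?_
    rintro x ⟨hx, hxd⟩
    obtain ⟨a, b, ε, hε, hxr⟩ := hx
    have hx' : x ∈ Cs := ⟨a, b, ε, hε, hxr⟩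
    have hxQ : x = Q + ((a:ℝ) - a₀ + (ε - ε₀)/3) • u + ((b:ℝ) - b₀ + (ε - ε₀)/3) • v := by
      rw [hxr, hQr]; module
    have hc1 : co1 x = (a:ℝ) - a₀ + (ε - ε₀)/3 := by rw [hxQ]; exact (hcoord _ _).1
    have hc2 : co2 x = (b:ℝ) - b₀ + (ε - ε₀)/3 := by rw [hxQ]; exact (hcoord _ _).2
    have hb := hbound x hx' hxd
    have hcb1 := abs_le.mp hb.1
    have hcb2 := abs_le.mp hb.2
    have hεb : -1 ≤ (ε - ε₀)/3 ∧ (ε - ε₀)/3 ≤ 1 := by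
      rcases hε with h | h <;> rcases hε₀ with h' | h' <;> rw [h, h'] <;> norm_num
    have hM' : (M:ℝ) = |(a₀:ℝ)| + |(b₀:ℝ)| + (⌈2*d⌉:ℝ) + 1 := by
      rw [hM]; push_cast; ring
    have hceil := Int.le_ceil (2*d)
    have ha1 := neg_abs_le (a₀:ℝ); have ha2 := le_abs_self (a₀:ℝ)
    have hb1 := neg_abs_le (b₀:ℝ); have hb2 := le_abs_self (b₀:ℝ)
    have ha0 := abs_nonneg (a₀:ℝ); have hb0 := abs_nonneg (b₀:ℝ)
    have haZ : -M ≤ a ∧ a ≤ M := by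
      constructor <;> [skip; skip] <;>
      · have : (-(M:ℝ) ≤ (a:ℝ)) ∧ ((a:ℝ) ≤ (M:ℝ)) := by
          constructor <;> linarith [hc1, hcb1.1, hcb1.2, hεb.1, hεb.2]
        first
        | exact_mod_cast this.1
        | exact_mod_cast this.2
    have hbZ : -M ≤ b ∧ b ≤ M := by
      have : (-(M:ℝ) ≤ (b:ℝ)) ∧ ((b:ℝ) ≤ (M:ℝ)) := by
        constructor <;> linarith [hc2, hcb2.1, hcb2.2, hεb.1, hεb.2]
      exact ⟨by exact_mod_cast this.1, by exact_mod_cast this.2⟩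
    obtain ⟨e, he01, heq⟩ : ∃ e : ℤ, (e = 0 ∨ e = 1) ∧ ((e:ℤ):ℝ) = ε := by
      rcases hε with h | h
      · exact ⟨0, Or.inl rfl, by rw [h]; norm_num⟩
      · exact ⟨1, Or.inr rfl, by rw [h]; norm_num⟩
    refine ⟨(a, b, e), ?_, ?_⟩
    · simp only [Finset.coe_product, Set.mem_prod, Finset.mem_coe, Finset.mem_Icc,
        Finset.mem_insert, Finset.mem_singleton]
      exact ⟨⟨haZ.1, haZ.2⟩, ⟨hbZ.1, hbZ.2⟩, he01⟩
    · simp only [heq]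
      rw [hxr]
  refine ⟨hfin, ?_⟩
  rw [finsum_mem_eq_finite_toFinset_sum _ hfin]
  set F := hfin.toFinset with hF
  have hmemF : ∀ x : E2, x ∈ F → x ∈ Cs ∧ dist x Q = d := by
    intro x hx
    rw [hF, Set.Finite.mem_toFinset] at hx
    exact hx
  have hmemF' : ∀ x : E2, x ∈ Cs → dist x Q = d → x ∈ F := by
    intro x h1 h2
    rw [hF, Set.Finite.mem_toFinset]
    exact ⟨h1, h2⟩
  obtain ⟨A, hA⟩ : ∃ A : ℝ, ∑ x ∈ F, co1 x = A := ⟨_, rfl⟩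
  obtain ⟨B, hB⟩ : ∃ B : ℝ, ∑ x ∈ F, co2 x = B := ⟨_, rfl⟩
  have hS1 : ∑ x ∈ F, (x - Q) = A • u + B • v := by
    have hcong : ∀ x ∈ F, x - Q = co1 x • u + co2 x • v := by
      intro x hx
      conv_lhs => rw [(hmain x (hmemF x hx).1).1]
      abel
    rw [Finset.sum_congr rfl hcong, Finset.sum_add_distrib, ← Finset.sum_smul, ← Finset.sum_smul,
      hA, hB]
  have hcψ : ∀ x : E2, co1 (ψ x) = co2 x ∧ co2 (ψ x) = -co1 x - co2 x := by
    intro x; simp only [hψ]; exact hcoord _ _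
  have hcφ : ∀ x : E2, co1 (φ x) = -co1 x - co2 x ∧ co2 (φ x) = co1 x := by
    intro x; simp only [hφ]; exact hcoord _ _
  have hφψ : ∀ x ∈ Cs, φ (ψ x) = x := by
    intro x hx
    simp only [hφ]
    rw [(hcψ x).1, (hcψ x).2]
    conv_rhs => rw [(hmain x hx).1]
    module
  have hψφ : ∀ x ∈ Cs, ψ (φ x) = x := by
    intro x hx
    simp only [hψ]
    rw [(hcφ x).1, (hcφ x).2]
    conv_rhs => rw [(hmain x hx).1]
    module
  have hφF : ∀ x ∈ F, φ x ∈ F := by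
    intro x hx
    obtain ⟨h1, h2⟩ := hmemF x hx
    exact hmemF' _ ((hmain x h1).2.1) ((hdmap x h1 d h2).1)
  have hψF : ∀ x ∈ F, ψ x ∈ F := by
    intro x hx
    obtain ⟨h1, h2⟩ := hmemF x hx
    exact hmemF' _ ((hmain x h1).2.2) ((hdmap x h1 d h2).2)
  have hS2 : ∑ x ∈ F, (x - Q) = ∑ x ∈ F, (φ x - Q) :=
    Finset.sum_nbij' ψ φ hψF hφF
      (fun x hx => hφψ x (hmemF x hx).1)
      (fun x hx => hψφ x (hmemF x hx).1)
      (fun x hx => by rw [hφψ x (hmemF x hx).1])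
  have hS3 : ∑ x ∈ F, (φ x - Q) = (-A - B) • u + A • v := by
    have hcong : ∀ x ∈ F, φ x - Q = (-co1 x - co2 x) • u + co1 x • v := by
      intro x _
      simp only [hφ]
      abel
    rw [Finset.sum_congr rfl hcong, Finset.sum_add_distrib, ← Finset.sum_smul, ← Finset.sum_smul,
      Finset.sum_sub_distrib, Finset.sum_neg_distrib, hA, hB]
  have key : A • u + B • v = (-A - B) • u + A • v := by rw [← hS1, hS2, hS3]
  have e1 := congrArg (fun w : E2 => ⟪w, u⟫) key
  have e2 := congrArg (fun w : E2 => ⟪w, v⟫) key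
  simp only [inner_add_left, real_inner_smul_left, hu2, hvu, huv, hv2] at e1 e2
  have hA0 : A = 0 := by linarith
  have hB0 : B = 0 := by linarith
  rw [hS1, hA0, hB0]
  simp
end
end
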